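/- arXiv:2501.06975 — 6 statements merged into one kernel-verified Lean document; each statement's English description precedes it below -/
import Mathlib

section
/- Let k ∈ ℕ and let f = (f_1, …, f_k) with f_i : ℝ → ℝ ∪ {+∞} be in duality position, i.e., H(x; f) = Σ_{i=1}^k f_i(x_i) − Σ_{1≤i<j≤k} x_i x_j ≥ 0 for all x ∈ ℝ^k. Then the zero set Γ_f = {x ∈ ℝ^k : H(x; f) = 0} is monotone: for all a, b ∈ Γ_f and all indices i, j ∈ {1, …, k}, (b_i − a_i)(b_j − a_j) ≥ 0. -/
open Finset

/-- The pairwise-product cost `c(x) = Σ_{i<j} x_i x_j`. -/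
def cCost {k : ℕ} (x : Fin k → ℝ) : ℝ :=
  ∑ p ∈ Finset.univ.filter (fun p : Fin k × Fin k => p.1 < p.2), x p.1 * x p.2

lemma key_aux (k : ℕ) (f : Fin k → ℝ → EReal)
    (hdual : ∀ x : Fin k → ℝ, ((cCost x : ℝ) : EReal) ≤ ∑ i, f i (x i))
    (a b : Fin k → ℝ)
    (ha : ∑ i, f i (a i) = ((cCost a : ℝ) : EReal))
    (hb : ∑ i, f i (b i) = ((cCost b : ℝ) : EReal))
    (i j : Fin k) (hi : 0 < b i - a i) (hj : b j - a j < 0) : False := by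
  set a' : Fin k → ℝ := fun m => if 0 < b m - a m then b m else a m with ha'
  set b' : Fin k → ℝ := fun m => if 0 < b m - a m then a m else b m with hb'
  have hsum : ∑ m, f m (a' m) + ∑ m, f m (b' m)
      = ∑ m, f m (a m) + ∑ m, f m (b m) := by
    rw [← Finset.sum_add_distrib, ← Finset.sum_add_distrib]
    apply Finset.sum_congr rfl
    intro m _
    by_cases hm : 0 < b m - a m
    · simp only [a', b', if_pos hm]; exact add_comm _ _
    · simp only [a', b', if_neg hm]
  have hle : cCost a' + cCost b' ≤ cCost a + cCost b := by
    have : ((cCost a' + cCost b' : ℝ) : EReal) ≤ ((cCost a + cCost b : ℝ) : EReal) := by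
      push_cast
      calc ((cCost a' : ℝ) : EReal) + ((cCost b' : ℝ) : EReal)
          ≤ ∑ m, f m (a' m) + ∑ m, f m (b' m) := add_le_add (hdual a') (hdual b')
        _ = ∑ m, f m (a m) + ∑ m, f m (b m) := hsum
        _ = ((cCost a : ℝ) : EReal) + ((cCost b : ℝ) : EReal) := by rw [ha, hb]
    exact_mod_cast this
  -- strict inequality in the other direction
  have hlt : cCost a + cCost b < cCost a' + cCost b' := by
    unfold cCost
    rw [← Finset.sum_add_distrib, ← Finset.sum_add_distrib]
    have hij : i ≠ j := by
      intro h; rw [h] at hi; linarith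
    have hterm : ∀ p ∈ Finset.univ.filter (fun p : Fin k × Fin k => p.1 < p.2),
        a p.1 * a p.2 + b p.1 * b p.2 ≤ a' p.1 * a' p.2 + b' p.1 * b' p.2 := by
      intro p _
      by_cases h1 : 0 < b p.1 - a p.1 <;> by_cases h2 : 0 < b p.2 - a p.2 <;>
        simp only [a', b', h1, h2, if_true, if_false, if_pos, if_neg, not_false_iff] <;>
        [linarith [mul_comm (a p.1) (a p.2)]; nlinarith; nlinarith; linarith]
    rcases lt_or_gt_of_ne hij with h | h
    · apply Finset.sum_lt_sum hterm
      refine ⟨(i, j), by simp [h], ?_⟩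
      have hnj : ¬ (0 < b j - a j) := by linarith
      simp only [a', b', hi, hnj, if_true, if_false, if_pos, if_neg, not_false_iff]
      nlinarith
    · apply Finset.sum_lt_sum hterm
      refine ⟨(j, i), by simp [h], ?_⟩
      have hnj : ¬ (0 < b j - a j) := by linarith
      simp only [a', b', hi, hnj, if_true, if_false, if_pos, if_neg, not_false_iff]
      nlinarith
  linarith

/-- If the tuple `f = (f_1, …, f_k)` of `ℝ ∪ {+∞}`-valued functions is in
duality position, i.e. `Σ_i f_i(x_i) ≥ c(x)` for all `x`, then the zero set
`Γ_f = {x | Σ_i f_i(x_i) = c(x)}` is monotone. -/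
theorem zero_set_monotone (k : ℕ) (f : Fin k → ℝ → EReal)
    (hbot : ∀ i t, f i t ≠ ⊥)
    (hdual : ∀ x : Fin k → ℝ, ((cCost x : ℝ) : EReal) ≤ ∑ i, f i (x i))
    (a b : Fin k → ℝ)
    (ha : ∑ i, f i (a i) = ((cCost a : ℝ) : EReal))
    (hb : ∑ i, f i (b i) = ((cCost b : ℝ) : EReal))
    (i j : Fin k) :
    0 ≤ (b i - a i) * (b j - a j) := by
  by_contra h
  push_neg at h
  rcases mul_neg_iff.mp h with ⟨h1, h2⟩ | ⟨h1, h2⟩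
  · exact key_aux k f hdual a b ha hb i j h1 h2
  · exact key_aux k f hdual a b ha hb j i h2 h1
end

section
/- Let k ≥ 2 and, for each pair i < j in {1, …, k}, let Γ_{ij} : ℝ → ℝ be a continuous strictly increasing bijection; set Γ_{ji} = Γ_{ij}⁻¹ and y_{ij} = Γ_{ij}(0). Define f_i(x_i) = Σ_{j=1}^{i−1} ∫_{y_{ji}}^{x_i} Γ_{ij}(u) du + Σ_{j=i+1}^{k} ∫_0^{x_i} Γ_{ij}(u) du. Then Σ_{i=1}^k f_i(x_i) ≥ Σ_{1≤i<j≤k} x_i x_j for all x = (x_1, …, x_k) ∈ ℝ^k, with equality if and only if x_j = Γ_{ij}(x_i) for all pairs i < j. -/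
open Finset intervalIntegral

/-- Key identity: `∫_0^a φ + ∫_{φ 0}^{φ a} ψ = a * φ a` for a continuous strictly
monotone `φ` with inverse `ψ`. -/
lemma young_identity {φ ψ : ℝ → ℝ} (hφc : Continuous φ) (hφm : StrictMono φ)
    (h1 : Function.LeftInverse ψ φ) (h2 : Function.RightInverse ψ φ) (a : ℝ) :
    (∫ u in (0:ℝ)..a, φ u) + (∫ u in (φ 0)..(φ a), ψ u) - a * φ a = 0 := by
  have hψm : StrictMono ψ := fun u v huv => hφm.lt_iff_lt.mp (by rwa [h2 u, h2 v])
  have hψc : Continuous ψ := hψm.monotone.continuous_of_surjective h1.surjective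
  set m : ℝ → ℝ := fun a => (∫ u in (0:ℝ)..a, φ u) + (∫ u in (φ 0)..(φ a), ψ u) - a * φ a
    with hm_def
  have mbound : ∀ s t : ℝ, s ≤ t → |m t - m s| ≤ (t - s) * (φ t - φ s) := by
    intro s t hst
    have hφst : φ s ≤ φ t := hφm.monotone hst
    have hHadd : (∫ u in (0:ℝ)..s, φ u) + ∫ u in s..t, φ u = ∫ u in (0:ℝ)..t, φ u :=
      integral_add_adjacent_intervals (hφc.intervalIntegrable _ _) (hφc.intervalIntegrable _ _)
    have hGadd : (∫ u in (φ 0)..(φ s), ψ u) + ∫ u in (φ s)..(φ t), ψ u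
        = ∫ u in (φ 0)..(φ t), ψ u :=
      integral_add_adjacent_intervals (hψc.intervalIntegrable _ _) (hψc.intervalIntegrable _ _)
    have hA1 : (t - s) * φ s ≤ ∫ u in s..t, φ u := by
      have := integral_mono_on (μ := MeasureTheory.volume) hst
        (_root_.intervalIntegrable_const (c := φ s)) (hφc.intervalIntegrable s t)
        (fun u hu => hφm.monotone hu.1)
      simpa [smul_eq_mul] using this
    have hA2 : (∫ u in s..t, φ u) ≤ (t - s) * φ t := by
      have := integral_mono_on (μ := MeasureTheory.volume) hst
        (hφc.intervalIntegrable s t) (_root_.intervalIntegrable_const (c := φ t))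
        (fun u hu => hφm.monotone hu.2)
      simpa [smul_eq_mul] using this
    have hB1 : (φ t - φ s) * s ≤ ∫ u in (φ s)..(φ t), ψ u := by
      have := integral_mono_on (μ := MeasureTheory.volume) hφst
        (_root_.intervalIntegrable_const (c := ψ (φ s))) (hψc.intervalIntegrable _ _)
        (fun u hu => hψm.monotone hu.1)
      rw [h1 s] at this
      simpa [smul_eq_mul] using this
    have hB2 : (∫ u in (φ s)..(φ t), ψ u) ≤ (φ t - φ s) * t := by
      have := integral_mono_on (μ := MeasureTheory.volume) hφst
        (hψc.intervalIntegrable _ _) (_root_.intervalIntegrable_const (c := ψ (φ t)))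
        (fun u hu => hψm.monotone hu.2)
      rw [h1 t] at this
      simpa [smul_eq_mul] using this
    have hdiff : m t - m s
        = (∫ u in s..t, φ u) + (∫ u in (φ s)..(φ t), ψ u) - (t * φ t - s * φ s) := by
      simp only [hm_def]
      linarith [hHadd, hGadd]
    rw [abs_le]
    constructor <;> nlinarith [hA1, hA2, hB1, hB2]
  have hm : ∀ x : ℝ, HasDerivAt m 0 x := by
    intro x
    rw [hasDerivAt_iff_tendsto]
    have hb : ∀ y : ℝ, ‖y - x‖⁻¹ * ‖m y - m x - (y - x) • (0:ℝ)‖ ≤ ‖φ y - φ x‖ := by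
      intro y
      have hkey : |m y - m x| ≤ |y - x| * |φ y - φ x| := by
        rcases le_total x y with h | h
        · have h1' := mbound x y h
          have h2' : 0 ≤ φ y - φ x := sub_nonneg.mpr (hφm.monotone h)
          rwa [abs_of_nonneg (sub_nonneg.mpr h), abs_of_nonneg h2']
        · have h1' := mbound y x h
          have h2' : 0 ≤ φ x - φ y := sub_nonneg.mpr (hφm.monotone h)
          rw [abs_sub_comm (m y), abs_sub_comm y, abs_sub_comm (φ y)]
          rwa [abs_of_nonneg (sub_nonneg.mpr h), abs_of_nonneg h2']
      simp only [smul_zero, sub_zero, Real.norm_eq_abs]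
      rcases eq_or_ne y x with rfl | hne
      · simp
      · have hpos : 0 < |y - x| := abs_pos.mpr (sub_ne_zero.mpr hne)
        rw [inv_mul_le_iff₀ hpos]
        exact hkey.trans (le_of_eq rfl)
    have hT : Filter.Tendsto (fun y => ‖φ y - φ x‖) (nhds x) (nhds 0) := by
      have h0 : Filter.Tendsto (fun y => φ y - φ x) (nhds x) (nhds (φ x - φ x)) :=
        (hφc.tendsto x).sub tendsto_const_nhds
      rw [sub_self] at h0
      simpa using h0.norm
    exact squeeze_zero (fun y => by positivity) hb hT
  have hconst : m a = m 0 :=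
    is_const_of_deriv_eq_zero (fun y => (hm y).differentiableAt) (fun y => (hm y).deriv) a 0
  have h0 : m 0 = 0 := by simp [hm_def]
  simpa [hm_def, h0] using hconst

/-- Young's inequality for a single pair, with the equality case. -/
lemma young_pair {φ ψ : ℝ → ℝ} (hφc : Continuous φ) (hφm : StrictMono φ)
    (h1 : Function.LeftInverse ψ φ) (h2 : Function.RightInverse ψ φ) (a b : ℝ) :
    a * b ≤ (∫ u in (0:ℝ)..a, φ u) + (∫ u in (φ 0)..b, ψ u) ∧
      ((∫ u in (0:ℝ)..a, φ u) + (∫ u in (φ 0)..b, ψ u) = a * b ↔ b = φ a) := by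
  have hψm : StrictMono ψ := fun u v huv => hφm.lt_iff_lt.mp (by rwa [h2 u, h2 v])
  have hψc : Continuous ψ := hψm.monotone.continuous_of_surjective h1.surjective
  have hGadd : (∫ u in (φ 0)..(φ a), ψ u) + ∫ u in (φ a)..b, ψ u
      = ∫ u in (φ 0)..b, ψ u :=
    integral_add_adjacent_intervals (hψc.intervalIntegrable _ _) (hψc.intervalIntegrable _ _)
  have hsub : (∫ u in (φ a)..b, (ψ u - a)) = (∫ u in (φ a)..b, ψ u) - (b - φ a) * a := by
    rw [integral_sub (hψc.intervalIntegrable _ _) (_root_.intervalIntegrable_const (c := a)),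
      integral_const, smul_eq_mul]
  have hid := young_identity hφc hφm h1 h2 a
  have hform : (∫ u in (0:ℝ)..a, φ u) + (∫ u in (φ 0)..b, ψ u) - a * b
      = ∫ u in (φ a)..b, (ψ u - a) := by
    rw [hsub]
    linarith [hGadd, hid]
  have hDpos : b ≠ φ a → 0 < ∫ u in (φ a)..b, (ψ u - a) := by
    intro hne
    rcases lt_or_gt_of_ne hne with hlt | hgt
    · have hpos : 0 < ∫ u in b..(φ a), (a - ψ u) := by
        apply intervalIntegral_pos_of_pos_on
          ((continuous_const.sub hψc).intervalIntegrable _ _) _ hlt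
        intro u hu
        have : ψ u < ψ (φ a) := hψm hu.2
        rw [h1 a] at this
        show 0 < a - ψ u
        linarith
      have hflip : (∫ u in (φ a)..b, (ψ u - a)) = ∫ u in b..(φ a), (a - ψ u) := by
        rw [integral_symm b (φ a), ← integral_neg]
        simp only [neg_sub]
      rw [hflip]; exact hpos
    · apply intervalIntegral_pos_of_pos_on
        ((hψc.sub continuous_const).intervalIntegrable _ _) _ hgt
      intro u hu
      have : ψ (φ a) < ψ u := hψm hu.1
      rw [h1 a] at this
      show 0 < ψ u - a
      linarith
  constructor
  · rcases eq_or_ne b (φ a) with rfl | hne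
    · have : (∫ u in (φ a)..(φ a), (ψ u - a)) = 0 := integral_same
      linarith [hform, this]
    · linarith [hform, hDpos hne]
  · constructor
    · intro heq
      by_contra hne
      have := hDpos hne
      linarith [hform]
    · intro hb
      subst hb
      have : (∫ u in (φ a)..(φ a), (ψ u - a)) = 0 := integral_same
      linarith [hform, this]

/-- Given, for each pair `i < j`, a continuous strictly increasing
bijection `Γ i j : ℝ → ℝ` with `Γ j i = (Γ i j)⁻¹`, the potentials
`f_i(x_i) = Σ_{j<i} ∫_{Γ j i 0}^{x_i} Γ i j + Σ_{j>i} ∫_0^{x_i} Γ i j` satisfy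
`Σ_i f_i(x_i) ≥ Σ_{i<j} x_i x_j`, with equality iff `x_j = Γ i j (x_i)` for all `i < j`. -/
theorem multi_young_inequality (k : ℕ) (hk : 2 ≤ k)
    (Γ : Fin k → Fin k → ℝ → ℝ)
    (hcont : ∀ i j : Fin k, i < j → Continuous (Γ i j))
    (hmono : ∀ i j : Fin k, i < j → StrictMono (Γ i j))
    (hbij : ∀ i j : Fin k, i < j → Function.Bijective (Γ i j))
    (hinv₁ : ∀ i j : Fin k, i < j → Function.LeftInverse (Γ j i) (Γ i j))
    (hinv₂ : ∀ i j : Fin k, i < j → Function.RightInverse (Γ j i) (Γ i j))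
    (f : Fin k → ℝ → ℝ)
    (hf : ∀ (i : Fin k) (t : ℝ),
      f i t = (∑ j ∈ Finset.univ.filter (fun j : Fin k => j < i),
                ∫ u in (Γ j i 0)..t, Γ i j u) +
              ∑ j ∈ Finset.univ.filter (fun j : Fin k => i < j),
                ∫ u in (0 : ℝ)..t, Γ i j u) :
    ∀ x : Fin k → ℝ,
      cCost x ≤ ∑ i, f i (x i) ∧
      ((∑ i, f i (x i)) = cCost x ↔ ∀ i j : Fin k, i < j → x j = Γ i j (x i)) := by
  intro x
  classical
  set P : Finset (Fin k × Fin k) :=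
    Finset.univ.filter (fun p : Fin k × Fin k => p.1 < p.2) with hP
  set T : Fin k × Fin k → ℝ := fun p =>
    (∫ u in (0:ℝ)..(x p.1), Γ p.1 p.2 u) + (∫ u in (Γ p.1 p.2 0)..(x p.2), Γ p.2 p.1 u)
    with hT
  have hpair : ∀ p ∈ P, x p.1 * x p.2 ≤ T p ∧ (T p = x p.1 * x p.2 ↔ x p.2 = Γ p.1 p.2 (x p.1)) := by
    intro p hp
    have hp' : p.1 < p.2 := by simpa [hP] using hp
    exact young_pair (hcont _ _ hp') (hmono _ _ hp') (hinv₁ _ _ hp') (hinv₂ _ _ hp') _ _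
  have hsum : ∑ i, f i (x i) = ∑ p ∈ P, T p := by
    calc ∑ i, f i (x i)
        = (∑ i, ∑ j ∈ Finset.univ.filter (fun j : Fin k => j < i),
            ∫ u in (Γ j i 0)..(x i), Γ i j u)
          + ∑ i, ∑ j ∈ Finset.univ.filter (fun j : Fin k => i < j),
            ∫ u in (0:ℝ)..(x i), Γ i j u := by
          simp only [hf]
          rw [Finset.sum_add_distrib]
      _ = (∑ p ∈ P, ∫ u in (Γ p.1 p.2 0)..(x p.2), Γ p.2 p.1 u)
          + ∑ p ∈ P, ∫ u in (0:ℝ)..(x p.1), Γ p.1 p.2 u := by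
          congr 1
          · exact (Finset.sum_finset_product_right' P Finset.univ
              (fun c => Finset.univ.filter (fun j : Fin k => j < c))
              (by simp [hP])
              (f := fun a c => ∫ u in (Γ a c 0)..(x c), Γ c a u)).symm
          · exact (Finset.sum_finset_product' P Finset.univ
              (fun c => Finset.univ.filter (fun j : Fin k => c < j))
              (by simp [hP])
              (f := fun c a => ∫ u in (0:ℝ)..(x c), Γ c a u)).symm
      _ = ∑ p ∈ P, T p := by
          rw [← Finset.sum_add_distrib]
          exact Finset.sum_congr rfl fun p _ => (add_comm _ _)
  have hc : cCost x = ∑ p ∈ P, x p.1 * x p.2 := rfl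
  refine ⟨?_, ?_, ?_⟩
  · rw [hsum, hc]
    exact Finset.sum_le_sum fun p hp => (hpair p hp).1
  · intro heq i j hij
    have hz : ∑ p ∈ P, (T p - x p.1 * x p.2) = 0 := by
      rw [Finset.sum_sub_distrib, ← hsum, ← hc, heq, sub_self]
    have hall := (Finset.sum_eq_zero_iff_of_nonneg
      (fun p hp => sub_nonneg.mpr (hpair p hp).1)).mp hz
    have hmem : (i, j) ∈ P := by simp [hP, hij]
    have := hall (i, j) hmem
    exact ((hpair (i, j) hmem).2).mp (by linarith [sub_eq_zero.mp this])
  · intro hall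
    rw [hsum, hc]
    exact Finset.sum_congr rfl fun p hp =>
      ((hpair p hp).2).mpr (hall p.1 p.2 (by simpa [hP] using hp))
end

section
/- Let γ_1, …, γ_k : ℝ → ℝ be nondecreasing functions with Σ_{i=1}^k γ_i(s) = s for all s ∈ ℝ, and let γ(s) = (γ_1(s), …, γ_k(s)). Suppose u ∈ ℝ^k satisfies u = γ(s(u)), where s(x) = Σ_{i=1}^k x_i, and let x = u + r for some r ∈ ℝ^k. Then ‖x − γ(s(x))‖² ≤ 2 s(r)² + 2 ‖r‖². -/
open Finset

/-- Let `γ_i` be nondecreasing with `Σ_i γ_i(s) = s`, and suppose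
`u = γ(s(u))` where `s(x) = Σ_i x_i`. Then for `x = u + r`,
`‖x − γ(s(x))‖² ≤ 2 s(r)² + 2 ‖r‖²`. -/
theorem reconstruction_error_bound (k : ℕ) (γ : Fin k → ℝ → ℝ)
    (hmono : ∀ i, Monotone (γ i))
    (hsum : ∀ s : ℝ, ∑ i, γ i s = s)
    (u r x : Fin k → ℝ)
    (hu : ∀ i, u i = γ i (∑ j, u j))
    (hx : ∀ i, x i = u i + r i) :
    ∑ i, (x i - γ i (∑ j, x j)) ^ 2 ≤ 2 * (∑ i, r i) ^ 2 + 2 * ∑ i, (r i) ^ 2 := by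
  set Su := ∑ j, u j with hSu
  set Sx := ∑ j, x j with hSx
  set d : Fin k → ℝ := fun i => γ i Sx - γ i Su with hd
  have hSxSu : Sx = Su + ∑ i, r i := by
    rw [hSx, hSu, ← Finset.sum_add_distrib]
    exact Finset.sum_congr rfl fun i _ => hx i
  have hdsum : ∑ i, d i = ∑ i, r i := by
    simp only [hd, Finset.sum_sub_distrib, hsum, hSxSu]; ring
  have hpt : ∀ i, x i - γ i Sx = r i - d i := by
    intro i
    rw [hx i, hu i, hd]; ring
  have hdsq : ∑ i, (d i) ^ 2 ≤ (∑ i, r i) ^ 2 := by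
    rw [← hdsum]
    rcases le_total Su Sx with h | h
    · exact Finset.sum_sq_le_sq_sum_of_nonneg fun i _ =>
        sub_nonneg.2 (hmono i h)
    · have : ∑ i, (d i) ^ 2 = ∑ i, (-d i) ^ 2 := by
        refine Finset.sum_congr rfl fun i _ => by ring
      rw [this, ← neg_pow_two (∑ i, d i), ← Finset.sum_neg_distrib]
      exact Finset.sum_sq_le_sq_sum_of_nonneg fun i _ =>
        by simp only [hd]; nlinarith [hmono i h]
  calc ∑ i, (x i - γ i Sx) ^ 2 = ∑ i, (r i - d i) ^ 2 := by
        exact Finset.sum_congr rfl fun i _ => by rw [hpt i]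
    _ ≤ ∑ i, (2 * (d i) ^ 2 + 2 * (r i) ^ 2) :=
        Finset.sum_le_sum fun i _ => by nlinarith [sq_nonneg (r i + d i)]
    _ = 2 * ∑ i, (d i) ^ 2 + 2 * ∑ i, (r i) ^ 2 := by
        rw [Finset.sum_add_distrib, ← Finset.mul_sum, ← Finset.mul_sum]
    _ ≤ 2 * (∑ i, r i) ^ 2 + 2 * ∑ i, (r i) ^ 2 := by linarith
end

section
/- Let ĝ_1, …, ĝ_k : ℝ → ℝ be twice continuously differentiable with ĝ_i''(x) ≥ 1 for all x ∈ ℝ, so that each ĝ_i' is a strictly increasing bijection of ℝ and γ̂_i = (ĝ_i')⁻¹ : ℝ → ℝ is well defined. Suppose Σ_{i=1}^k ĝ_i(y_i) ≥ s(y)²/2 for all y ∈ ℝ^k, and Σ_{i=1}^k γ̂_i(t) = t for all t ∈ ℝ. Then for every x ∈ ℝ^k, Σ_{i=1}^k ĝ_i(x_i) − s(x)²/2 ≥ (1/2) ‖x − γ̂(s(x))‖², where γ̂(t) = (γ̂_1(t), …, γ̂_k(t)). -/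
open Finset

lemma tangent_le_of_convex (f : ℝ → ℝ) (hc : ConvexOn ℝ Set.univ f)
    (hd : Differentiable ℝ f) (a b : ℝ) :
    f b + deriv f b * (a - b) ≤ f a := by
  rcases lt_trichotomy b a with h | h | h
  · have h1 : deriv f b ≤ (f a - f b) / (a - b) := by
      simpa [slope_def_field] using
        hc.deriv_le_slope (Set.mem_univ b) (Set.mem_univ a) h (hd b)
    rw [le_div_iff₀ (by linarith)] at h1
    linarith
  · simp [h]
  · have h1 : (f b - f a) / (b - a) ≤ deriv f b := by
      simpa [slope_def_field] using
        hc.slope_le_deriv (Set.mem_univ a) (Set.mem_univ b) h (hd b)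
    rw [div_le_iff₀ (by linarith)] at h1
    have h2 : deriv f b * (a - b) = -(deriv f b * (b - a)) := by ring
    linarith

lemma strong_convex_tangent (f : ℝ → ℝ) (hf : ContDiff ℝ 2 f)
    (hf'' : ∀ x, 1 ≤ deriv (deriv f) x) (a b : ℝ) :
    f b + deriv f b * (a - b) + (a - b) ^ 2 / 2 ≤ f a := by
  have hfd : Differentiable ℝ f := hf.differentiable (by norm_num)
  have hf2 : ContDiff ℝ ((1 : ℕ∞) + 1) f := by exact_mod_cast hf
  have hfd' : Differentiable ℝ (deriv f) :=
    (contDiff_succ_iff_deriv.mp hf2).2.2.differentiable (by norm_num)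
  set h : ℝ → ℝ := fun x => f x - x ^ 2 / 2 with hh
  have hderiv : deriv h = fun x => deriv f x - x := by
    funext x
    have : HasDerivAt h (deriv f x - x) x := by
      simpa using ((hfd x).hasDerivAt.fun_sub
        (((hasDerivAt_id x).pow 2).div_const 2))
    exact this.deriv
  have hd2 : Differentiable ℝ (deriv h) := by
    rw [hderiv]; exact hfd'.sub differentiable_id
  have hconv : ConvexOn ℝ Set.univ h := by
    apply convexOn_univ_of_deriv2_nonneg (hfd.fun_sub (by fun_prop)) (by rw [hderiv]; fun_prop)
    intro x
    have : deriv (deriv h) x = deriv (deriv f) x - 1 := by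
      rw [hderiv]
      have : HasDerivAt (fun x => deriv f x - x) (deriv (deriv f) x - 1) x :=
        (hfd' x).hasDerivAt.sub (hasDerivAt_id x)
      exact this.deriv
    show (0:ℝ) ≤ deriv (deriv h) x
    rw [this]
    linarith [hf'' x]
  have hhd : Differentiable ℝ h := hfd.sub (by fun_prop)
  have := tangent_le_of_convex h hconv hhd a b
  rw [hderiv] at this
  simp only [hh] at this
  nlinarith [this]

/-- If `ĝ_i` are `C²` with `ĝ_i'' ≥ 1` (so each `ĝ_i'` is a strictly
increasing bijection with inverse `γ̂_i`), `Σ_i ĝ_i(y_i) ≥ s(y)²/2` for all `y`, and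
`Σ_i γ̂_i(t) = t` for all `t`, then for every `x`,
`Σ_i ĝ_i(x_i) − s(x)²/2 ≥ (1/2) ‖x − γ̂(s(x))‖²`. -/
theorem strong_convexity_lower_bound (k : ℕ)
    (g γ : Fin k → ℝ → ℝ)
    (hg : ∀ i, ContDiff ℝ 2 (g i))
    (hg'' : ∀ (i : Fin k) (x : ℝ), 1 ≤ deriv (deriv (g i)) x)
    (hγ₁ : ∀ i, Function.LeftInverse (γ i) (deriv (g i)))
    (hγ₂ : ∀ i, Function.RightInverse (γ i) (deriv (g i)))
    (hdual : ∀ y : Fin k → ℝ, (∑ i, y i) ^ 2 / 2 ≤ ∑ i, g i (y i))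
    (hsum : ∀ t : ℝ, ∑ i, γ i t = t) :
    ∀ x : Fin k → ℝ,
      (1 / 2) * ∑ i, (x i - γ i (∑ j, x j)) ^ 2 ≤
        (∑ i, g i (x i)) - (∑ i, x i) ^ 2 / 2 := by
  intro x
  set t := ∑ j, x j with ht
  set y : Fin k → ℝ := fun i => γ i t with hy
  have hsy : ∑ i, y i = t := hsum t
  have hderiv : ∀ i, deriv (g i) (y i) = t := fun i => hγ₂ i t
  have key : ∀ i, g i (y i) + t * (x i - y i) + (x i - y i) ^ 2 / 2 ≤ g i (x i) := by
    intro i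
    have := strong_convex_tangent (g i) (hg i) (hg'' i) (x i) (y i)
    rwa [hderiv i] at this
  have hsumineq : ∑ i, (g i (y i) + t * (x i - y i) + (x i - y i) ^ 2 / 2)
      ≤ ∑ i, g i (x i) := Finset.sum_le_sum fun i _ => key i
  rw [Finset.sum_add_distrib, Finset.sum_add_distrib] at hsumineq
  have h1 : ∑ i, t * (x i - y i) = 0 := by
    rw [← Finset.mul_sum, Finset.sum_sub_distrib, ← ht, hsy]
    ring
  have h2 : ∑ i, (x i - y i) ^ 2 / 2 = (∑ i, (x i - y i) ^ 2) / 2 := by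
    rw [Finset.sum_div]
  have h3 : t ^ 2 / 2 ≤ ∑ i, g i (y i) := by
    have := hdual y
    rwa [hsy] at this
  rw [h1, h2] at hsumineq
  linarith
end

section
/- Let (Z_m)_{m=1}^n be independent and identically distributed random variables with values in a measurable space E, let N ∈ ℕ, B > 0, and let h_1, …, h_N : E → ℝ be measurable functions with |h_ℓ(z)| ≤ B for all z ∈ E and E[h_ℓ(Z_1)] = 0 for each ℓ ∈ {1, …, N}. Then E[ max_{1 ≤ ℓ ≤ N} | n^{-1} Σ_{m=1}^n h_ℓ(Z_m) | ] ≤ B √(2/n) ( √π + √(log(2N)) ). -/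
open MeasureTheory ProbabilityTheory Finset

section Aux

variable {Ω : Type*} [MeasurableSpace Ω] {μ : Measure Ω}

lemma aux_integrable_of_bounded [IsFiniteMeasure μ] {f : Ω → ℝ} (hf : Measurable f)
    {C : ℝ} (h : ∀ ω, |f ω| ≤ C) : Integrable f μ :=
  (integrable_const C).mono' hf.aestronglyMeasurable (ae_of_all _ fun ω => by
    simpa [Real.norm_eq_abs] using h ω)

/-- Hoeffding's lemma for variables bounded by `B` in absolute value. -/
lemma aux_hoeffding_mgf [IsProbabilityMeasure μ] {X : Ω → ℝ} (hX : Measurable X)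
    {B : ℝ} (hB : 0 < B) (hb : ∀ ω, |X ω| ≤ B) (hc : ∫ ω, X ω ∂μ = 0) (t : ℝ) :
    mgf X μ t ≤ Real.exp (t ^ 2 * B ^ 2 / 2) := by
  have key : ∀ ω, Real.exp (t * X ω) ≤
      Real.cosh (t * B) + (X ω / B) * Real.sinh (t * B) := by
    intro ω
    obtain ⟨hx1, hx2⟩ := abs_le.1 (hb ω)
    have ha : (0:ℝ) ≤ (B + X ω) / (2 * B) := by
      apply div_nonneg (by linarith) (by linarith)
    have hb' : (0:ℝ) ≤ (B - X ω) / (2 * B) := by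
      apply div_nonneg (by linarith) (by linarith)
    have hab : (B + X ω) / (2 * B) + (B - X ω) / (2 * B) = 1 := by
      field_simp; ring
    have := convexOn_exp.2 (Set.mem_univ (t * B)) (Set.mem_univ (-(t * B))) ha hb' hab
    simp only [smul_eq_mul] at this
    have harg : (B + X ω) / (2 * B) * (t * B) + (B - X ω) / (2 * B) * (-(t * B))
        = t * X ω := by
      rw [div_mul_eq_mul_div, div_mul_eq_mul_div, ← add_div,
        div_eq_iff (by positivity : (2 * B) ≠ 0)]
      ring
    rw [harg] at this
    refine this.trans (le_of_eq ?_)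
    rw [Real.cosh_eq, Real.sinh_eq]
    field_simp
    ring
  have hintX : Integrable X μ := aux_integrable_of_bounded hX hb
  have hintE : Integrable (fun ω => Real.exp (t * X ω)) μ := by
    apply aux_integrable_of_bounded (by fun_prop)
    intro ω
    rw [abs_of_nonneg (Real.exp_nonneg _)]
    have hle : t * X ω ≤ |t| * B := by
      refine le_trans (le_abs_self _) ?_
      rw [abs_mul]
      exact mul_le_mul_of_nonneg_left (hb ω) (abs_nonneg t)
    exact Real.exp_le_exp.2 hle
  have h1 : mgf X μ t ≤ Real.cosh (t * B) := by
    have : mgf X μ t ≤ ∫ ω, (Real.cosh (t * B) + (X ω / B) * Real.sinh (t * B)) ∂μ := by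
      refine integral_mono hintE ?_ key
      exact (integrable_const _).add
        ((hintX.div_const B).mul_const _)
    rw [integral_add (integrable_const _) ((hintX.div_const B).mul_const _),
      integral_const, integral_mul_const, integral_div, hc] at this
    simpa using this
  calc mgf X μ t ≤ Real.cosh (t * B) := h1
    _ ≤ Real.exp ((t * B) ^ 2 / 2) := Real.cosh_le_exp_half_sq _
    _ = Real.exp (t ^ 2 * B ^ 2 / 2) := by rw [mul_pow]

end Aux

set_option maxHeartbeats 2000000 in
/-- For i.i.d. `E`-valued random variables `Z_1, …, Z_n` and measurable
`h_1, …, h_N : E → ℝ` bounded by `B` and centered (`E[h_ℓ(Z_1)] = 0`),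
`E[max_ℓ |n⁻¹ Σ_m h_ℓ(Z_m)|] ≤ B √(2/n) (√π + √(log(2N)))`. -/
theorem maximal_inequality_bounded_iid
    {Ω : Type*} [MeasurableSpace Ω] (μ : Measure Ω) [IsProbabilityMeasure μ]
    {E : Type*} [MeasurableSpace E]
    (n : ℕ) (hn : 0 < n) (Z : Fin n → Ω → E)
    (hZmeas : ∀ m, Measurable (Z m))
    (hZindep : iIndepFun Z μ)
    (hZident : ∀ m m' : Fin n, IdentDistrib (Z m) (Z m') μ μ)
    (N : ℕ) (B : ℝ) (hB : 0 < B)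
    (h : Fin N → E → ℝ)
    (hmeas : ∀ ℓ, Measurable (h ℓ))
    (hbound : ∀ (ℓ : Fin N) (z : E), |h ℓ z| ≤ B)
    (hcentered : ∀ ℓ : Fin N, ∫ ω, h ℓ (Z ⟨0, hn⟩ ω) ∂μ = 0) :
    ∫ ω, (⨆ ℓ : Fin N, |(n : ℝ)⁻¹ * ∑ m : Fin n, h ℓ (Z m ω)|) ∂μ ≤
      B * Real.sqrt (2 / n) * (Real.sqrt Real.pi + Real.sqrt (Real.log (2 * N))) := by
  have hn' : (0:ℝ) < n := Nat.cast_pos.2 hn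
  rcases Nat.eq_zero_or_pos N with hN0 | hNpos
  · subst hN0
    simp only [Nat.cast_zero, mul_zero]
    rw [show (∫ ω, (⨆ ℓ : Fin 0, |(n : ℝ)⁻¹ * ∑ m : Fin n, h ℓ (Z m ω)|) ∂μ) = 0 by
      simp [Real.iSup_of_isEmpty]]
    positivity
  haveI : NeZero N := ⟨hNpos.ne'⟩
  -- centered at every index
  have hcent : ∀ (ℓ : Fin N) (m : Fin n), ∫ ω, h ℓ (Z m ω) ∂μ = 0 := by
    intro ℓ m
    have := ((hZident m ⟨0, hn⟩).comp (hmeas ℓ)).integral_eq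
    simpa [Function.comp] using this.trans (hcentered ℓ)
  -- mgf bound for the sums
  have hmgf : ∀ (ℓ : Fin N) (t : ℝ),
      mgf (∑ m : Fin n, (h ℓ ∘ Z m)) μ t ≤ Real.exp (n * (t ^ 2 * B ^ 2 / 2)) := by
    intro ℓ t
    have hind : iIndepFun (fun m => h ℓ ∘ Z m) μ :=
      hZindep.comp (fun _ => h ℓ) (fun _ => hmeas ℓ)
    have hmeas' : ∀ m, Measurable (h ℓ ∘ Z m) := fun m => (hmeas ℓ).comp (hZmeas m)
    rw [hind.mgf_sum hmeas']
    calc (∏ m : Fin n, mgf (h ℓ ∘ Z m) μ t)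
        ≤ ∏ m : Fin n, Real.exp (t ^ 2 * B ^ 2 / 2) := by
          refine Finset.prod_le_prod (fun m _ => mgf_nonneg) (fun m _ => ?_)
          exact aux_hoeffding_mgf (hmeas' m) hB (fun ω => hbound ℓ (Z m ω)) (hcent ℓ m) t
      _ = Real.exp (n * (t ^ 2 * B ^ 2 / 2)) := by
          rw [Finset.prod_const, Real.exp_nat_mul]; simp
  -- the normalized sums
  set g : Fin N → Ω → ℝ := fun ℓ ω => (n : ℝ)⁻¹ * ∑ m : Fin n, h ℓ (Z m ω) with hg
  have hgmeas : ∀ ℓ, Measurable (g ℓ) := by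
    intro ℓ
    exact (Finset.measurable_sum _ (fun m _ => (hmeas ℓ).comp (hZmeas m))).const_mul _
  have hgB : ∀ ℓ ω, |g ℓ ω| ≤ B := by
    intro ℓ ω
    rw [hg, abs_mul, abs_inv, Nat.abs_cast]
    calc (n:ℝ)⁻¹ * |∑ m : Fin n, h ℓ (Z m ω)|
        ≤ (n:ℝ)⁻¹ * (n * B) := by
          gcongr
          calc |∑ m : Fin n, h ℓ (Z m ω)| ≤ ∑ m : Fin n, |h ℓ (Z m ω)| :=
                Finset.abs_sum_le_sum_abs _ _
            _ ≤ ∑ _m : Fin n, B := Finset.sum_le_sum (fun m _ => hbound ℓ _)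
            _ = n * B := by simp
      _ = B := by field_simp
  have hmgfg : ∀ (ℓ : Fin N) (t : ℝ),
      ∫ ω, Real.exp (t * g ℓ ω) ∂μ ≤ Real.exp (t ^ 2 * B ^ 2 / (2 * n)) := by
    intro ℓ t
    have hfun : (fun ω => Real.exp (t * g ℓ ω))
        = fun ω => Real.exp ((t / n) * (∑ m : Fin n, (h ℓ ∘ Z m)) ω) := by
      funext ω
      simp only [hg, Finset.sum_apply, Function.comp_apply]
      rw [← mul_assoc, div_eq_mul_inv]
    have h1 : ∫ ω, Real.exp (t * g ℓ ω) ∂μ = mgf (∑ m : Fin n, (h ℓ ∘ Z m)) μ (t / n) := by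
      unfold mgf; rw [hfun]
    rw [h1]
    refine (hmgf ℓ (t / n)).trans (le_of_eq ?_)
    congr 1
    field_simp
  -- the max
  set M : Ω → ℝ := fun ω => ⨆ ℓ : Fin N, |g ℓ ω| with hM
  have hMmeas : Measurable M := Measurable.iSup (fun ℓ => (hgmeas ℓ).abs)
  have hM0 : ∀ ω, 0 ≤ M ω := by
    intro ω
    have := le_ciSup (f := fun ℓ : Fin N => |g ℓ ω|) (Set.finite_range _).bddAbove
      (Classical.arbitrary (Fin N))
    exact le_trans (abs_nonneg _) this
  have hMB : ∀ ω, M ω ≤ B := fun ω => ciSup_le fun ℓ => hgB ℓ ω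
  have hMabs : ∀ ω, |M ω| ≤ B := fun ω => abs_le.2 ⟨by linarith [hM0 ω, hB.le], hMB ω⟩
  have hMint : Integrable M μ := aux_integrable_of_bounded hMmeas hMabs
  -- parameters
  set L : ℝ := Real.log (2 * N) with hLdef
  have hL : 0 < L := Real.log_pos (by
    have : (1:ℝ) ≤ N := by exact_mod_cast hNpos
    linarith)
  set lam : ℝ := Real.sqrt (2 * n * L) / B with hlam
  have hlam0 : 0 < lam := div_pos (Real.sqrt_pos.2 (by positivity)) hB
  -- Jensen
  have hexpint : Integrable (fun ω => Real.exp (lam * M ω)) μ := by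
    apply aux_integrable_of_bounded (by fun_prop)
    intro ω
    rw [abs_of_nonneg (Real.exp_nonneg _)]
    exact Real.exp_le_exp.2 (mul_le_mul_of_nonneg_left (hMB ω) hlam0.le)
  have hjensen : Real.exp (lam * ∫ ω, M ω ∂μ) ≤ ∫ ω, Real.exp (lam * M ω) ∂μ := by
    have := convexOn_exp.map_integral_le (μ := μ) (f := fun ω => lam * M ω)
      Real.continuous_exp.continuousOn isClosed_univ
      (ae_of_all _ fun ω => Set.mem_univ _) (hMint.const_mul lam) hexpint
    rw [integral_const_mul] at this
    exact this
  -- union bound on the mgf of the max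
  have hT : ∫ ω, Real.exp (lam * M ω) ∂μ ≤ 2 * N * Real.exp (lam ^ 2 * B ^ 2 / (2 * n)) := by
    have hptw : ∀ ω, Real.exp (lam * M ω) ≤
        ∑ ℓ : Fin N, (Real.exp (lam * g ℓ ω) + Real.exp (-lam * g ℓ ω)) := by
      intro ω
      obtain ⟨ℓ₀, hℓ₀⟩ : ∃ ℓ₀, M ω = |g ℓ₀ ω| := by
        obtain ⟨ℓ₀, hℓ₀⟩ := Finite.exists_max (fun ℓ => |g ℓ ω|)
        exact ⟨ℓ₀, le_antisymm (ciSup_le fun ℓ => hℓ₀ ℓ)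
          (le_ciSup (f := fun ℓ : Fin N => |g ℓ ω|) (Set.finite_range _).bddAbove ℓ₀)⟩
      have h1 : Real.exp (lam * M ω) ≤
          Real.exp (lam * g ℓ₀ ω) + Real.exp (-lam * g ℓ₀ ω) := by
        rw [hℓ₀]
        rcases abs_cases (g ℓ₀ ω) with ⟨he, _⟩ | ⟨he, _⟩ <;> rw [he]
        · exact le_add_of_nonneg_right (Real.exp_nonneg _)
        · rw [mul_neg, ← neg_mul]
          exact le_add_of_nonneg_left (Real.exp_nonneg _)
      refine h1.trans (Finset.single_le_sum (f := fun ℓ =>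
        Real.exp (lam * g ℓ ω) + Real.exp (-lam * g ℓ ω))
        (fun ℓ _ => by positivity) (Finset.mem_univ ℓ₀))
    have hsumint : Integrable (fun ω => ∑ ℓ : Fin N,
        (Real.exp (lam * g ℓ ω) + Real.exp (-lam * g ℓ ω))) μ := by
      apply integrable_finset_sum
      intro ℓ _
      have hbnd : ∀ (t : ℝ), Integrable (fun ω => Real.exp (t * g ℓ ω)) μ := by
        intro t
        apply aux_integrable_of_bounded (by fun_prop)
        intro ω
        rw [abs_of_nonneg (Real.exp_nonneg _)]
        have hle : t * g ℓ ω ≤ |t| * B := by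
          refine le_trans (le_abs_self _) ?_
          rw [abs_mul]
          exact mul_le_mul_of_nonneg_left (hgB ℓ ω) (abs_nonneg t)
        exact Real.exp_le_exp.2 hle
      exact (hbnd lam).add (hbnd (-lam))
    calc ∫ ω, Real.exp (lam * M ω) ∂μ
        ≤ ∫ ω, ∑ ℓ : Fin N, (Real.exp (lam * g ℓ ω) + Real.exp (-lam * g ℓ ω)) ∂μ :=
          integral_mono hexpint hsumint hptw
      _ = ∑ ℓ : Fin N, ∫ ω, (Real.exp (lam * g ℓ ω) + Real.exp (-lam * g ℓ ω)) ∂μ := by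
          rw [integral_finset_sum]
          intro ℓ _
          have hbnd : ∀ (t : ℝ), Integrable (fun ω => Real.exp (t * g ℓ ω)) μ := by
            intro t
            apply aux_integrable_of_bounded (by fun_prop)
            intro ω
            rw [abs_of_nonneg (Real.exp_nonneg _)]
            have hle : t * g ℓ ω ≤ |t| * B := by
              refine le_trans (le_abs_self _) ?_
              rw [abs_mul]
              exact mul_le_mul_of_nonneg_left (hgB ℓ ω) (abs_nonneg t)
            exact Real.exp_le_exp.2 hle
          exact (hbnd lam).add (hbnd (-lam))
      _ ≤ ∑ ℓ : Fin N, (Real.exp (lam ^ 2 * B ^ 2 / (2 * n))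
            + Real.exp (lam ^ 2 * B ^ 2 / (2 * n))) := by
          refine Finset.sum_le_sum (fun ℓ _ => ?_)
          have hbnd : ∀ (t : ℝ), Integrable (fun ω => Real.exp (t * g ℓ ω)) μ := by
            intro t
            apply aux_integrable_of_bounded (by fun_prop)
            intro ω
            rw [abs_of_nonneg (Real.exp_nonneg _)]
            have hle : t * g ℓ ω ≤ |t| * B := by
              refine le_trans (le_abs_self _) ?_
              rw [abs_mul]
              exact mul_le_mul_of_nonneg_left (hgB ℓ ω) (abs_nonneg t)
            exact Real.exp_le_exp.2 hle
          rw [integral_add (hbnd lam) (hbnd (-lam))]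
          have h1 := hmgfg ℓ lam
          have h2 := hmgfg ℓ (-lam)
          rw [neg_sq] at h2
          exact add_le_add h1 h2
      _ = 2 * N * Real.exp (lam ^ 2 * B ^ 2 / (2 * n)) := by
          rw [Finset.sum_const, Finset.card_univ, Fintype.card_fin, nsmul_eq_mul]
          ring
  -- combine
  have hexp2 : lam ^ 2 * B ^ 2 / (2 * n) = L := by
    rw [hlam, div_pow, Real.sq_sqrt (by positivity)]
    field_simp
  have hN1 : (1:ℝ) ≤ N := by exact_mod_cast hNpos
  have h2N : (0:ℝ) < 2 * N := by linarith
  have hmain : lam * ∫ ω, M ω ∂μ ≤ L + L := by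
    have hc : (0:ℝ) < 2 * N * Real.exp (lam ^ 2 * B ^ 2 / (2 * n)) :=
      mul_pos h2N (Real.exp_pos _)
    have := (Real.le_log_iff_exp_le hc).2 (hjensen.trans hT)
    rwa [Real.log_mul h2N.ne' (Real.exp_ne_zero _), Real.log_exp, hexp2] at this
  have hfinal : ∫ ω, M ω ∂μ ≤ 2 * L / lam := by
    rw [le_div_iff₀ hlam0, mul_comm]
    linarith [hmain]
  have hs : (0:ℝ) < Real.sqrt (2 * n * L) := Real.sqrt_pos.2 (by positivity)
  have e2 : Real.sqrt (2 / n) * Real.sqrt L = Real.sqrt (2 * L / n) := by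
    rw [← Real.sqrt_mul (by positivity)]
    congr 1
    ring
  have e1 : Real.sqrt (2 * L / n) * Real.sqrt (2 * n * L) = 2 * L := by
    rw [← Real.sqrt_mul (by positivity),
      show 2 * L / (n:ℝ) * (2 * ↑n * L) = (2 * L) ^ 2 by field_simp,
      Real.sqrt_sq (by positivity)]
  have hkey : 2 * L / lam = B * Real.sqrt (2 / n) * Real.sqrt L := by
    have hprod : B * Real.sqrt (2 / n) * Real.sqrt L * Real.sqrt (2 * n * L)
        = 2 * L * B := by
      rw [show B * Real.sqrt (2 / n) * Real.sqrt L * Real.sqrt (2 * n * L)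
          = B * (Real.sqrt (2 / n) * Real.sqrt L * Real.sqrt (2 * n * L)) from by ring,
        e2, e1]
      ring
    rw [hlam, div_div_eq_mul_div, div_eq_iff hs.ne']
    exact hprod.symm
  have : ∫ ω, M ω ∂μ ≤ B * Real.sqrt (2 / n) * Real.sqrt L := hkey ▸ hfinal
  refine this.trans ?_
  have hπ : (0:ℝ) ≤ Real.sqrt Real.pi := Real.sqrt_nonneg _
  have h2n : (0:ℝ) ≤ Real.sqrt (2 / n) := Real.sqrt_nonneg _
  nlinarith [Real.sqrt_nonneg L, mul_nonneg (mul_nonneg hB.le h2n) hπ]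
end

section
/- Let k ≥ 2, λ ≥ 0, m = (m₀, m₁, m₂, m₃) ∈ ℝ⁴_{≥0}. Let f = (f_1, …, f_k) ∈ (𝒞_m)^k be a c-conjugate tuple, Γ = {x ∈ ℝ^k : H(x; f) = 0}, and γ = γ_f the associated curve. Let U and R be independent ℝ^k-valued random vectors with U ∈ Γ almost surely and E[R] = 0, set X = U + R, and assume E‖X‖² < ∞. Let X_1, …, X_n be i.i.d. copies of X, and let f̂ be a random c-conjugate tuple in (𝒞_m)^k, measurable in the samples, which almost surely minimizes the empirical objective n^{-1} Σ_{m=1}^n [ H(X_m; h) + λ ‖X_m − γ_h(s(X_m))‖² ] over all c-conjugate tuples h ∈ (𝒞_m)^k; write γ̂ = γ_{f̂}. Then the expected empirical mean squared error satisfies E[ n^{-1} Σ_{m=1}^n ‖γ(s(X_m)) − γ̂(s(X_m))‖² ] ≤ ((16λ + 4)k + 16λ + 2m₂ + 6)/(2λ + 1) · E‖R‖². -/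
open MeasureTheory ProbabilityTheory Finset

noncomputable section

/-- The admissible class `𝒞_m`: `C²` functions with `|f(0)| ≤ m₀`, `|f'(0)| ≤ m₁`,
`0 ≤ f'' ≤ m₂`, and `f''` Lipschitz with constant `m₃`. -/
def Cm (m₀ m₁ m₂ m₃ : ℝ) : Set (ℝ → ℝ) :=
  {f | ContDiff ℝ 2 f ∧ |f 0| ≤ m₀ ∧ |deriv f 0| ≤ m₁ ∧
    (∀ x : ℝ, 0 ≤ deriv (deriv f) x ∧ deriv (deriv f) x ≤ m₂) ∧
    (∀ x x' : ℝ, |deriv (deriv f) x - deriv (deriv f) x'| ≤ m₃ * |x - x'|)}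

/-- The diagonal coordinate `s(x) = Σ_i x_i`. -/
def sCoord {k : ℕ} (x : Fin k → ℝ) : ℝ := ∑ i, x i

/-- The loss `H(x; f) = Σ_i f_i(x_i) − c(x)`. -/
def Hfun {k : ℕ} (f : Fin k → ℝ → ℝ) (x : Fin k → ℝ) : ℝ :=
  (∑ i, f i (x i)) - cCost x

/-- The tuple `f` is `c`-conjugate: each `f_i(t)` is the supremum of
`c(x) − Σ_{j≠i} f_j(x_j)` over all `x` with `x_i = t`. -/
def CConjugateTuple {k : ℕ} (f : Fin k → ℝ → ℝ) : Prop :=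
  ∀ (i : Fin k) (t : ℝ),
    IsLUB {v : ℝ | ∃ x : Fin k → ℝ, x i = t ∧
      v = cCost x - ∑ j ∈ Finset.univ.erase i, f j (x j)} (f i t)

/-- The monotone curve `γ_f(t) = ((g_1')⁻¹(t), …, (g_k')⁻¹(t))` where `g_i = f_i + q`,
`q(x) = x²/2`, so that `g_i'(y) = f_i'(y) + y`. -/
def curveOf {k : ℕ} (f : Fin k → ℝ → ℝ) (t : ℝ) : Fin k → ℝ :=
  fun i => Function.invFun (fun y : ℝ => deriv (f i) y + y) t

/-- The empirical objective
`n⁻¹ Σ_m [H(X_m; h) + λ ‖X_m − γ_h(s(X_m))‖²]` for samples `X_1, …, X_n`. -/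
def empObj {k : ℕ} (n : ℕ) (lam : ℝ) (X : Fin n → Fin k → ℝ)
    (h : Fin k → ℝ → ℝ) : ℝ :=
  (n : ℝ)⁻¹ * ∑ m : Fin n,
    (Hfun h (X m) + lam * ∑ i, (X m i - curveOf h (sCoord (X m)) i) ^ 2)

open Filter

section Single
variable {f : ℝ → ℝ} {m₂ : ℝ}

-- basic regularity
theorem myDiff (hC : ContDiff ℝ 2 f) : Differentiable ℝ f := hC.differentiable (by norm_num)

theorem myDiff' (hC : ContDiff ℝ 2 f) : Differentiable ℝ (deriv f) := by
  have h := (contDiff_succ_iff_deriv (n := 1)).1 (by exact_mod_cast hC)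
  exact h.2.2.differentiable (by norm_num)

theorem myCont' (hC : ContDiff ℝ 2 f) : Continuous (deriv f) := (myDiff' hC).continuous

theorem derivMono (hC : ContDiff ℝ 2 f) (h2 : ∀ x, 0 ≤ deriv (deriv f) x) :
    Monotone (deriv f) := monotone_of_deriv_nonneg (myDiff' hC) h2

theorem derivLip (hC : ContDiff ℝ 2 f) (h2 : ∀ x, deriv (deriv f) x ≤ m₂)
    {u v : ℝ} (huv : u ≤ v) : deriv f v - deriv f u ≤ m₂ * (v - u) := by
  have hmono : Monotone (fun x => m₂ * x - deriv f x) := by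
    apply monotone_of_deriv_nonneg
    · exact (differentiable_const _).mul differentiable_id |>.sub (myDiff' hC)
    · intro x
      have : deriv (fun x => m₂ * x - deriv f x) x = m₂ - deriv (deriv f) x := by
        have h1 : HasDerivAt (fun x => m₂ * x - deriv f x) (m₂ - deriv (deriv f) x) x := by
          exact ((hasDerivAt_id x).const_mul m₂ |>.sub ((myDiff' hC) x).hasDerivAt).congr_deriv (by ring)
        exact h1.deriv
      rw [this]; linarith [h2 x]
  have := hmono huv
  simp only at this; linarith

-- convexity lower bound: f(y) ≥ f(x) + f'(x)(y-x)
theorem taylorLower (hC : ContDiff ℝ 2 f) (h2 : ∀ x, 0 ≤ deriv (deriv f) x)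
    (x y : ℝ) : deriv f x * (y - x) ≤ f y - f x := by
  set F : ℝ → ℝ := fun z => f z - deriv f x * z with hF
  have hFd : Differentiable ℝ F := (myDiff hC).sub ((differentiable_const _).mul differentiable_id)
  have hFderiv : ∀ z, deriv F z = deriv f z - deriv f x := by
    intro z
    have : HasDerivAt F (deriv f z - deriv f x) z :=
      ((myDiff hC) z).hasDerivAt.sub ((hasDerivAt_id z).const_mul (deriv f x) |>.congr_deriv (by ring))
    exact this.deriv
  have hmono := derivMono hC h2
  rcases le_total x y with h | h
  · have : F x ≤ F y := by
      apply monotoneOn_of_deriv_nonneg (convex_Icc x y) hFd.continuous.continuousOn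
        (hFd.differentiableOn)
        (fun z hz => by
          rw [hFderiv z]
          rw [interior_Icc] at hz
          have := hmono (le_of_lt hz.1)
          linarith)
        (by exact Set.left_mem_Icc.2 h) (by exact Set.right_mem_Icc.2 h) h
    simp only [hF] at this; nlinarith
  · have : F x ≤ F y := by
      apply antitoneOn_of_deriv_nonpos (convex_Icc y x) hFd.continuous.continuousOn
        (hFd.differentiableOn)
        (fun z hz => by
          rw [hFderiv z]
          rw [interior_Icc] at hz
          have := hmono (le_of_lt hz.2)
          linarith)
        (by exact Set.left_mem_Icc.2 h) (by exact Set.right_mem_Icc.2 h) h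
    simp only [hF] at this; nlinarith

-- Taylor upper bound: f(y) ≤ f(x) + f'(x)(y-x) + m₂(y-x)²/2
theorem taylorUpper (hC : ContDiff ℝ 2 f) (h2 : ∀ x, deriv (deriv f) x ≤ m₂)
    (x y : ℝ) : f y - f x ≤ deriv f x * (y - x) + m₂ * (y - x) ^ 2 / 2 := by
  set G : ℝ → ℝ := fun z => deriv f x * z + m₂ * (z - x) ^ 2 / 2 - f z with hG
  have hGd : Differentiable ℝ G := by
    apply Differentiable.sub _ (myDiff hC)
    apply Differentiable.add
    · exact (differentiable_const _).mul differentiable_id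
    · apply Differentiable.div_const
      exact (differentiable_const _).mul ((differentiable_id.sub_const x).pow 2)
  have hGderiv : ∀ z, deriv G z = deriv f x + m₂ * (z - x) - deriv f z := by
    intro z
    have h1 : HasDerivAt (fun z : ℝ => deriv f x * z + m₂ * (z - x) ^ 2 / 2)
        (deriv f x + m₂ * (z - x)) z := by
      have ha : HasDerivAt (fun z : ℝ => deriv f x * z) (deriv f x) z :=
        (hasDerivAt_id z).const_mul (deriv f x) |>.congr_deriv (by ring)
      have hb : HasDerivAt (fun z : ℝ => m₂ * (z - x) ^ 2 / 2) (m₂ * (z - x)) z := by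
        have : HasDerivAt (fun z : ℝ => (z - x)) 1 z := (hasDerivAt_id z).sub_const x
        have := (this.pow 2).const_mul m₂ |>.div_const 2
        exact this.congr_deriv (by ring)
      exact ha.add hb
    exact (h1.sub ((myDiff hC) z).hasDerivAt).deriv
  have key : G x ≤ G y := by
    rcases le_total x y with h | h
    · apply monotoneOn_of_deriv_nonneg (convex_Icc x y) hGd.continuous.continuousOn
        hGd.differentiableOn
        (fun z hz => by
          rw [hGderiv z]; rw [interior_Icc] at hz
          have := derivLip hC h2 (le_of_lt hz.1)
          linarith)
        (Set.left_mem_Icc.2 h) (Set.right_mem_Icc.2 h) h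
    · apply antitoneOn_of_deriv_nonpos (convex_Icc y x) hGd.continuous.continuousOn
        hGd.differentiableOn
        (fun z hz => by
          rw [hGderiv z]; rw [interior_Icc] at hz
          have := derivLip hC h2 (le_of_lt hz.2)
          linarith)
        (Set.left_mem_Icc.2 h) (Set.right_mem_Icc.2 h) h
  simp only [hG] at key; nlinarith

-- properties of g' = deriv f + id
theorem gLB (hC : ContDiff ℝ 2 f) (h2 : ∀ x, 0 ≤ deriv (deriv f) x)
    {u v : ℝ} (huv : u ≤ v) :
    v - u ≤ (deriv f v + v) - (deriv f u + u) := by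
  have := derivMono hC h2 huv; linarith

theorem gUB (hC : ContDiff ℝ 2 f) (h2 : ∀ x, deriv (deriv f) x ≤ m₂)
    {u v : ℝ} (huv : u ≤ v) :
    (deriv f v + v) - (deriv f u + u) ≤ (m₂ + 1) * (v - u) := by
  have := derivLip hC h2 huv; nlinarith

theorem gStrictMono (hC : ContDiff ℝ 2 f) (h2 : ∀ x, 0 ≤ deriv (deriv f) x) :
    StrictMono (fun y : ℝ => deriv f y + y) := by
  intro u v huv
  have := gLB hC h2 (le_of_lt huv)
  simp only; linarith

theorem gSurj (hC : ContDiff ℝ 2 f) (h2 : ∀ x, 0 ≤ deriv (deriv f) x) :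
    Function.Surjective (fun y : ℝ => deriv f y + y) := by
  have hcont : Continuous (fun y : ℝ => deriv f y + y) := (myCont' hC).add continuous_id
  apply hcont.surjective
  · apply tendsto_atTop_mono' _ _ (tendsto_atTop_add_const_right _ (deriv f 0) tendsto_id)
    filter_upwards [eventually_ge_atTop (0:ℝ)] with y hy
    have := derivMono hC h2 hy
    simp only [id]; linarith
  · apply tendsto_atBot_mono' _ _ (tendsto_atBot_add_const_right _ (deriv f 0) tendsto_id)
    filter_upwards [eventually_le_atBot (0:ℝ)] with y hy
    have := derivMono hC h2 hy
    simp only [id]; linarith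

theorem gammaRight (hC : ContDiff ℝ 2 f) (h2 : ∀ x, 0 ≤ deriv (deriv f) x) (t : ℝ) :
    deriv f (Function.invFun (fun y : ℝ => deriv f y + y) t) +
      Function.invFun (fun y : ℝ => deriv f y + y) t = t :=
  Function.rightInverse_invFun (gSurj hC h2) t

theorem gammaLeft (hC : ContDiff ℝ 2 f) (h2 : ∀ x, 0 ≤ deriv (deriv f) x) (y : ℝ) :
    Function.invFun (fun y : ℝ => deriv f y + y) (deriv f y + y) = y :=
  Function.leftInverse_invFun (gStrictMono hC h2).injective y

-- γ is monotone and 1-Lipschitz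
theorem gammaMono (hC : ContDiff ℝ 2 f) (h2 : ∀ x, 0 ≤ deriv (deriv f) x)
    {t u : ℝ} (htu : t ≤ u) :
    Function.invFun (fun y : ℝ => deriv f y + y) t ≤
      Function.invFun (fun y : ℝ => deriv f y + y) u := by
  set γ := Function.invFun (fun y : ℝ => deriv f y + y)
  by_contra hcon
  push_neg at hcon
  have := gStrictMono hC h2 hcon
  simp only at this
  rw [show deriv f (γ u) + γ u = u from gammaRight hC h2 u,
    show deriv f (γ t) + γ t = t from gammaRight hC h2 t] at this
  linarith

theorem gammaLip (hC : ContDiff ℝ 2 f) (h2 : ∀ x, 0 ≤ deriv (deriv f) x)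
    {t u : ℝ} (htu : t ≤ u) :
    Function.invFun (fun y : ℝ => deriv f y + y) u -
      Function.invFun (fun y : ℝ => deriv f y + y) t ≤ u - t := by
  set γ := Function.invFun (fun y : ℝ => deriv f y + y)
  have h1 := gammaMono hC h2 htu
  have h2' := gLB hC h2 (u := γ t) (v := γ u) h1
  rw [show deriv f (γ u) + γ u = u from gammaRight hC h2 u,
    show deriv f (γ t) + γ t = t from gammaRight hC h2 t] at h2'
  linarith

-- γ grows at least linearly (for surjectivity of σ)
theorem gammaGrow (hC : ContDiff ℝ 2 f) (h2 : ∀ x, 0 ≤ deriv (deriv f) x)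
    (h2' : ∀ x, deriv (deriv f) x ≤ m₂) (hm₂ : 0 ≤ m₂)
    {t u : ℝ} (htu : t ≤ u) :
    (u - t) / (m₂ + 1) ≤ Function.invFun (fun y : ℝ => deriv f y + y) u -
      Function.invFun (fun y : ℝ => deriv f y + y) t := by
  set γ := Function.invFun (fun y : ℝ => deriv f y + y)
  have h1 := gammaMono hC h2 htu
  have h3 := gUB hC h2' (u := γ t) (v := γ u) h1
  rw [show deriv f (γ u) + γ u = u from gammaRight hC h2 u,
    show deriv f (γ t) + γ t = t from gammaRight hC h2 t] at h3
  rw [div_le_iff₀ (by linarith)]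
  linarith

end Single

section Tuple
variable {k : ℕ} {m₀ m₁ m₂ m₃ : ℝ} {f : Fin k → ℝ → ℝ}

theorem cCost_eq (x : Fin k → ℝ) :
    cCost x = ((∑ i, x i) ^ 2 - ∑ i, x i ^ 2) / 2 := by
  have hsq : (∑ i, x i) ^ 2 = ∑ p : Fin k × Fin k, x p.1 * x p.2 := by
    rw [sq, Finset.sum_mul_sum, ← Finset.univ_product_univ, Finset.sum_product]
  have hsplit := Finset.sum_filter_add_sum_filter_not Finset.univ
    (fun p : Fin k × Fin k => p.1 < p.2) (fun p => x p.1 * x p.2)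
  have hsplit2 := Finset.sum_filter_add_sum_filter_not
    (Finset.univ.filter (fun p : Fin k × Fin k => ¬ p.1 < p.2))
    (fun p : Fin k × Fin k => p.2 < p.1) (fun p => x p.1 * x p.2)
  rw [Finset.filter_filter, Finset.filter_filter] at hsplit2
  have hgt : ∑ p ∈ Finset.univ.filter
      (fun p : Fin k × Fin k => ¬ p.1 < p.2 ∧ p.2 < p.1), x p.1 * x p.2
      = ∑ p ∈ Finset.univ.filter (fun p : Fin k × Fin k => p.1 < p.2), x p.1 * x p.2 := by
    apply Finset.sum_nbij' (fun p => Prod.swap p) (fun p => Prod.swap p)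
    · intro a ha; simp only [Finset.mem_filter, Finset.mem_univ, true_and] at ha ⊢
      exact ha.2
    · intro a ha; simp only [Finset.mem_filter, Finset.mem_univ, true_and] at ha ⊢
      exact ⟨not_lt.2 (le_of_lt ha), ha⟩
    · intro a _; simp
    · intro a _; simp
    · intro a _; simp [mul_comm]
  have hdiag : ∑ p ∈ Finset.univ.filter
      (fun p : Fin k × Fin k => ¬ p.1 < p.2 ∧ ¬ p.2 < p.1), x p.1 * x p.2
      = ∑ i, x i ^ 2 := by
    apply Finset.sum_nbij' (fun p => p.1) (fun i => (i, i))
    · intro a _; simp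
    · intro a _; simp
    · intro a ha; simp only [Finset.mem_filter, Finset.mem_univ, true_and] at ha
      have : a.1 = a.2 := le_antisymm (not_lt.1 ha.2) (not_lt.1 ha.1)
      exact Prod.ext rfl this
    · intro a _; simp
    · intro a ha; simp only [Finset.mem_filter, Finset.mem_univ, true_and] at ha
      have : a.1 = a.2 := le_antisymm (not_lt.1 ha.2) (not_lt.1 ha.1)
      rw [sq, ← this]
  unfold cCost
  rw [hsq, ← hsplit, ← hsplit2, hgt, hdiag]
  ring

theorem Hfun_eq (x : Fin k → ℝ) :
    Hfun f x = (∑ i, f i (x i)) - ((∑ i, x i) ^ 2 - ∑ i, x i ^ 2) / 2 := by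
  unfold Hfun; rw [cCost_eq]

variable (hf : ∀ i, f i ∈ Cm m₀ m₁ m₂ m₃)
include hf

theorem hfC (i : Fin k) : ContDiff ℝ 2 (f i) := (hf i).1
theorem hf2 (i : Fin k) : ∀ z, 0 ≤ deriv (deriv (f i)) z := fun z => ((hf i).2.2.2.1 z).1
theorem hf2' (i : Fin k) : ∀ z, deriv (deriv (f i)) z ≤ m₂ := fun z => ((hf i).2.2.2.1 z).2

theorem deriv_at_curve (t : ℝ) (i : Fin k) :
    deriv (f i) (curveOf f t i) = t - curveOf f t i := by
  have h := gammaRight (f := f i) (hfC hf i) (hf2 hf i) t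
  unfold curveOf
  linarith [h]

omit hf in
theorem sum_expand1 (x y : Fin k → ℝ) (t : ℝ) :
    ∑ i, (t - y i) * (x i - y i) =
      t * (∑ i, x i) - t * (∑ i, y i) - (∑ i, x i * y i) + ∑ i, y i ^ 2 := by
  have h : ∀ i : Fin k, (t - y i) * (x i - y i) = t * x i - t * y i - x i * y i + y i ^ 2 :=
    fun i => by ring
  rw [Finset.sum_congr rfl (fun i _ => h i), Finset.sum_add_distrib, Finset.sum_sub_distrib,
    Finset.sum_sub_distrib, ← Finset.mul_sum, ← Finset.mul_sum]

omit hf in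
theorem sum_expand2 (x y : Fin k → ℝ) :
    ∑ i, (x i - y i) ^ 2 = (∑ i, x i ^ 2) - 2 * (∑ i, x i * y i) + ∑ i, y i ^ 2 := by
  have h : ∀ i : Fin k, (x i - y i) ^ 2 = x i ^ 2 - 2 * (x i * y i) + y i ^ 2 :=
    fun i => by ring
  rw [Finset.sum_congr rfl (fun i _ => h i), Finset.sum_add_distrib, Finset.sum_sub_distrib,
    ← Finset.mul_sum]

theorem star_bound (x : Fin k → ℝ) (t : ℝ) :
    Hfun f (curveOf f t) +
      (sCoord x - sCoord (curveOf f t)) * (t - (sCoord x + sCoord (curveOf f t)) / 2) +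
      (∑ i, (x i - curveOf f t i) ^ 2) / 2 ≤ Hfun f x := by
  set y : Fin k → ℝ := curveOf f t with hy
  have hsum : ∑ i, (t - y i) * (x i - y i) ≤ (∑ i, f i (x i)) - ∑ i, f i (y i) := by
    rw [← Finset.sum_sub_distrib]
    apply Finset.sum_le_sum
    intro i _
    have h := taylorLower (hfC hf i) (hf2 hf i) (y i) (x i)
    have hd : deriv (f i) (y i) = t - y i := deriv_at_curve hf t i
    rw [hd] at h
    linarith
  rw [Hfun_eq, Hfun_eq]
  unfold sCoord
  rw [sum_expand1 x y t] at hsum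
  have h2 := sum_expand2 x y
  nlinarith [hsum, h2]

omit hf in
theorem H_nonneg (hconj : CConjugateTuple f) (hk : 0 < k) (x : Fin k → ℝ) :
    0 ≤ Hfun f x := by
  set i : Fin k := ⟨0, hk⟩
  have hub := (hconj i (x i)).1 ⟨x, rfl, rfl⟩
  have hsum : f i (x i) + ∑ j ∈ Finset.univ.erase i, f j (x j) = ∑ j, f j (x j) :=
    Finset.add_sum_erase Finset.univ (fun j => f j (x j)) (Finset.mem_univ i)
  unfold Hfun
  linarith

omit hf in
theorem H_approx (hconj : CConjugateTuple f) (i : Fin k) (a : ℝ) {ε : ℝ} (hε : 0 < ε) :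
    ∃ x : Fin k → ℝ, x i = a ∧ Hfun f x < ε := by
  obtain ⟨v, hv, hlt, -⟩ := (hconj i a).exists_between (show f i a - ε < f i a by linarith)
  obtain ⟨x, hxi, rfl⟩ := hv
  refine ⟨x, hxi, ?_⟩
  have hsum : f i (x i) + ∑ j ∈ Finset.univ.erase i, f j (x j) = ∑ j, f j (x j) :=
    Finset.add_sum_erase Finset.univ (fun j => f j (x j)) (Finset.mem_univ i)
  unfold Hfun
  rw [hxi] at hsum
  linarith

theorem sigma_lip {t u : ℝ} (htu : t ≤ u) :
    sCoord (curveOf f u) - sCoord (curveOf f t) ≤ k * (u - t) := by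
  unfold sCoord
  rw [← Finset.sum_sub_distrib]
  calc ∑ i, (curveOf f u i - curveOf f t i) ≤ ∑ _i : Fin k, (u - t) :=
        Finset.sum_le_sum (fun i _ => gammaLip (hfC hf i) (hf2 hf i) htu)
    _ = k * (u - t) := by rw [Finset.sum_const, Finset.card_univ, Fintype.card_fin]; ring

theorem sigma_mono {t u : ℝ} (htu : t ≤ u) :
    sCoord (curveOf f t) ≤ sCoord (curveOf f u) := by
  unfold sCoord
  exact Finset.sum_le_sum (fun i _ => gammaMono (hfC hf i) (hf2 hf i) htu)

theorem sigma_grow (hm₂ : 0 ≤ m₂) (hk : 0 < k) {t u : ℝ} (htu : t ≤ u) :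
    (u - t) / (m₂ + 1) ≤ sCoord (curveOf f u) - sCoord (curveOf f t) := by
  unfold sCoord
  rw [← Finset.sum_sub_distrib]
  have h1 : ∀ i : Fin k, (u - t) / (m₂ + 1) ≤ curveOf f u i - curveOf f t i :=
    fun i => gammaGrow (hfC hf i) (hf2 hf i) (hf2' hf i) hm₂ htu
  calc (u - t) / (m₂ + 1) = ∑ _i : Fin 1, (u - t) / (m₂ + 1) := by simp
    _ ≤ ∑ i : Fin k, (curveOf f u i - curveOf f t i) := by
        simp only [Finset.sum_const, Finset.card_univ, Fintype.card_fin, one_smul, nsmul_eq_mul,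
          Nat.cast_one, one_mul]
        calc (u - t) / (m₂ + 1) = (1 : ℕ) * ((u - t) / (m₂ + 1)) := by ring
          _ ≤ k * ((u - t) / (m₂ + 1)) := by
              apply mul_le_mul_of_nonneg_right
              · exact_mod_cast Nat.one_le_cast.2 hk
              · exact div_nonneg (by linarith) (by linarith)
          _ ≤ ∑ i : Fin k, (curveOf f u i - curveOf f t i) := by
              calc (k : ℝ) * ((u - t) / (m₂ + 1)) = ∑ _i : Fin k, (u - t) / (m₂ + 1) := by
                    rw [Finset.sum_const, Finset.card_univ, Fintype.card_fin]; ring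
                _ ≤ _ := Finset.sum_le_sum (fun i _ => h1 i)

theorem gammaContinuous (i : Fin k) : Continuous (fun t => curveOf f t i) := by
  have hlip : LipschitzWith 1 (fun t => curveOf f t i) := by
    apply LipschitzWith.of_dist_le_mul
    intro t u
    unfold curveOf
    rw [Real.dist_eq, Real.dist_eq, NNReal.coe_one, one_mul]
    rcases le_total t u with h | h
    · have h1 := gammaMono (hfC hf i) (hf2 hf i) h
      have h2 := gammaLip (hfC hf i) (hf2 hf i) h
      rw [abs_of_nonpos (by linarith), abs_of_nonpos (by linarith)]
      linarith
    · have h1 := gammaMono (hfC hf i) (hf2 hf i) h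
      have h2 := gammaLip (hfC hf i) (hf2 hf i) h
      rw [abs_of_nonneg (by linarith), abs_of_nonneg (by linarith)]
      linarith
  exact hlip.continuous

theorem sigma_cont : Continuous (fun t => sCoord (curveOf f t)) := by
  unfold sCoord
  exact continuous_finset_sum _ (fun i _ => gammaContinuous hf i)

theorem sigma_surj (hm₂ : 0 ≤ m₂) (hk : 0 < k) :
    Function.Surjective (fun t => sCoord (curveOf f t)) := by
  apply (sigma_cont hf).surjective
  · apply tendsto_atTop_mono' _ _
      (tendsto_atTop_add_const_left _ (sCoord (curveOf f 0))
        ((tendsto_id.atTop_div_const (by linarith : (0:ℝ) < m₂ + 1))))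
    filter_upwards [eventually_ge_atTop (0:ℝ)] with t ht
    have h := sigma_grow hf hm₂ hk ht
    have e : (t - 0) / (m₂ + 1) = t / (m₂ + 1) := by ring
    simp only [id_eq]
    linarith
  · apply tendsto_atBot_mono' _ _
      (tendsto_atBot_add_const_left _ (sCoord (curveOf f 0))
        ((tendsto_id.atBot_div_const (by linarith : (0:ℝ) < m₂ + 1))))
    filter_upwards [eventually_le_atBot (0:ℝ)] with t ht
    have h := sigma_grow hf hm₂ hk ht
    have e : (0 - t) / (m₂ + 1) = -(t / (m₂ + 1)) := by ring
    simp only [id_eq]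
    linarith

theorem Hcurve_cont : Continuous (fun t => Hfun f (curveOf f t)) := by
  have h1 : Continuous (fun t => ∑ i, f i (curveOf f t i)) :=
    continuous_finset_sum _ (fun i _ =>
      ((hfC hf i).continuous).comp (gammaContinuous hf i))
  have h2 : Continuous (fun t => ∑ i, curveOf f t i ^ 2) :=
    continuous_finset_sum _ (fun i _ => (gammaContinuous hf i).pow 2)
  have h3 : Continuous (fun t => ∑ i, curveOf f t i) :=
    continuous_finset_sum _ (fun i _ => gammaContinuous hf i)
  have heq : (fun t => Hfun f (curveOf f t)) =
      fun t => (∑ i, f i (curveOf f t i)) -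
        ((∑ i, curveOf f t i) ^ 2 - ∑ i, curveOf f t i ^ 2) / 2 := by
    funext t; rw [Hfun_eq]
  rw [heq]
  exact h1.sub (((h3.pow 2).sub h2).div_const 2)

theorem H_on_curve_zero (hconj : CConjugateTuple f) (hm₂ : 0 ≤ m₂) (hk : 0 < k) (t₀ : ℝ) :
    Hfun f (curveOf f t₀) = 0 := by
  set i : Fin k := ⟨0, hk⟩
  set a : ℝ := curveOf f t₀ i with ha
  have ht₀ : deriv (f i) a + a = t₀ := by
    have := gammaRight (f := f i) (hfC hf i) (hf2 hf i) t₀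
    exact this
  have hex : ∀ n : ℕ, ∃ t : ℝ, (a - curveOf f t i) ^ 2 ≤ 2 / (n + 1) ∧
      Hfun f (curveOf f t) ≤ 1 / (n + 1) := by
    intro n
    obtain ⟨x, hxi, hxH⟩ := H_approx hconj i a (ε := 1 / (n + 1)) (by positivity)
    obtain ⟨t, ht⟩ := sigma_surj hf hm₂ hk (sCoord x)
    simp only at ht
    refine ⟨t, ?_, ?_⟩
    · have hstar := star_bound hf x t
      rw [ht, sub_self, zero_mul, add_zero] at hstar
      have h0 := H_nonneg hconj hk (curveOf f t)
      have hterm : (a - curveOf f t i) ^ 2 ≤ ∑ j, (x j - curveOf f t j) ^ 2 := by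
        rw [← hxi]
        exact Finset.single_le_sum (f := fun j => (x j - curveOf f t j) ^ 2)
          (fun j _ => sq_nonneg _) (Finset.mem_univ i)
      have h2n : 2 / ((n:ℝ) + 1) = 2 * (1 / ((n:ℝ) + 1)) := by ring
      linarith
    · have hstar := star_bound hf x t
      rw [ht, sub_self, zero_mul, add_zero] at hstar
      have hterm : (0:ℝ) ≤ ∑ j, (x j - curveOf f t j) ^ 2 :=
        Finset.sum_nonneg (fun j _ => sq_nonneg _)
      nlinarith
  choose tseq h1 h2 using hex
  have hsq0 : Filter.Tendsto (fun n => (a - curveOf f (tseq n) i) ^ 2) atTop (nhds 0) := by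
    apply squeeze_zero (fun n => sq_nonneg _) h1
    have : Filter.Tendsto (fun n : ℕ => 2 / ((n : ℝ) + 1)) atTop (nhds 0) := by
      apply Filter.Tendsto.div_atTop tendsto_const_nhds
      exact tendsto_atTop_add_const_right _ _ tendsto_natCast_atTop_atTop
    exact this
  have habs : Filter.Tendsto (fun n => curveOf f (tseq n) i) atTop (nhds a) := by
    rw [tendsto_iff_dist_tendsto_zero]
    have : (fun n => dist (curveOf f (tseq n) i) a) =
        fun n => Real.sqrt ((a - curveOf f (tseq n) i) ^ 2) := by
      funext n
      rw [Real.sqrt_sq_eq_abs, Real.dist_eq, abs_sub_comm]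
    rw [this]
    have := (Real.continuous_sqrt.tendsto 0).comp hsq0
    simpa [Function.comp_def] using this
  have htn : Filter.Tendsto tseq atTop (nhds t₀) := by
    have hg : Continuous (fun y => deriv (f i) y + y) := (myCont' (hfC hf i)).add continuous_id
    have hcomp := (hg.tendsto a).comp habs
    rw [ht₀] at hcomp
    have : (fun n => deriv (f i) (curveOf f (tseq n) i) + curveOf f (tseq n) i) = tseq := by
      funext n
      exact gammaRight (f := f i) (hfC hf i) (hf2 hf i) (tseq n)
    rw [show ((fun y => deriv (f i) y + y) ∘ fun n => curveOf f (tseq n) i) =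
        (fun n => deriv (f i) (curveOf f (tseq n) i) + curveOf f (tseq n) i) from rfl, this]
      at hcomp
    exact hcomp
  have hlim : Filter.Tendsto (fun n => Hfun f (curveOf f (tseq n))) atTop
      (nhds (Hfun f (curveOf f t₀))) := ((Hcurve_cont hf).tendsto t₀).comp htn
  have hle : Hfun f (curveOf f t₀) ≤ 0 := by
    apply le_of_tendsto_of_tendsto' hlim _ h2
    have : Filter.Tendsto (fun n : ℕ => 1 / ((n : ℝ) + 1)) atTop (nhds 0) := by
      apply Filter.Tendsto.div_atTop tendsto_const_nhds
      exact tendsto_atTop_add_const_right _ _ tendsto_natCast_atTop_atTop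
    exact this
  exact le_antisymm hle (H_nonneg hconj hk (curveOf f t₀))

theorem sigma_id (hconj : CConjugateTuple f) (hm₂ : 0 ≤ m₂) (hk : 0 < k) (t : ℝ) :
    sCoord (curveOf f t) = t := by
  have key : ∀ t' : ℝ, (sCoord (curveOf f t') - sCoord (curveOf f t)) *
      (t - (sCoord (curveOf f t') + sCoord (curveOf f t)) / 2) ≤ 0 := by
    intro t'
    have hstar := star_bound hf (curveOf f t') t
    rw [H_on_curve_zero hf hconj hm₂ hk t, H_on_curve_zero hf hconj hm₂ hk t'] at hstar
    have hterm : (0:ℝ) ≤ ∑ j, (curveOf f t' j - curveOf f t j) ^ 2 :=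
      Finset.sum_nonneg (fun j _ => sq_nonneg _)
    linarith
  have hkpos : (0:ℝ) < k := by exact_mod_cast hk
  apply le_antisymm
  · -- σ t ≤ t
    by_contra hcon
    push_neg at hcon
    set ε : ℝ := sCoord (curveOf f t) - t with hε
    have hεpos : 0 < ε := by simp only [hε]; linarith
    set t' : ℝ := t - ε / k with ht'
    have htt' : t' ≤ t := by
      simp only [ht']
      have : 0 < ε / k := div_pos hεpos hkpos
      linarith
    have hΔpos : 0 < sCoord (curveOf f t) - sCoord (curveOf f t') := by
      have := sigma_grow hf hm₂ hk htt'
      have h3 : 0 < (t - t') / (m₂ + 1) := div_pos (by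
        simp only [ht']; have : 0 < ε / k := div_pos hεpos hkpos; linarith) (by linarith)
      linarith
    have hΔle : sCoord (curveOf f t) - sCoord (curveOf f t') ≤ k * (t - t') := sigma_lip hf htt'
    have hk2 : (k : ℝ) * (t - t') = ε := by
      simp only [ht']
      field_simp
      try ring
    have := key t'
    nlinarith
  · -- t ≤ σ t
    by_contra hcon
    push_neg at hcon
    set ε : ℝ := t - sCoord (curveOf f t) with hε
    have hεpos : 0 < ε := by simp only [hε]; linarith
    set t' : ℝ := t + ε / k with ht'
    have htt' : t ≤ t' := by
      simp only [ht']
      have : 0 < ε / k := div_pos hεpos hkpos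
      linarith
    have hΔpos : 0 < sCoord (curveOf f t') - sCoord (curveOf f t) := by
      have := sigma_grow hf hm₂ hk htt'
      have h3 : 0 < (t' - t) / (m₂ + 1) := div_pos (by
        simp only [ht']; have : 0 < ε / k := div_pos hεpos hkpos; linarith) (by linarith)
      linarith
    have hΔle : sCoord (curveOf f t') - sCoord (curveOf f t) ≤ k * (t' - t) := sigma_lip hf htt'
    have hk2 : (k : ℝ) * (t' - t) = ε := by
      simp only [ht']
      field_simp
      try ring
    have := key t'
    nlinarith

theorem H_ge_quad (hconj : CConjugateTuple f) (hm₂ : 0 ≤ m₂) (hk : 0 < k) (x : Fin k → ℝ) :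
    (∑ i, (x i - curveOf f (sCoord x) i) ^ 2) / 2 ≤ Hfun f x := by
  have hstar := star_bound hf x (sCoord x)
  rw [H_on_curve_zero hf hconj hm₂ hk, sigma_id hf hconj hm₂ hk] at hstar
  nlinarith [hstar]

theorem on_curve_of_H_zero (hconj : CConjugateTuple f) (hm₂ : 0 ≤ m₂) (hk : 0 < k)
    {x : Fin k → ℝ} (hx : Hfun f x = 0) (i : Fin k) :
    x i = curveOf f (sCoord x) i := by
  have h := H_ge_quad hf hconj hm₂ hk x
  rw [hx] at h
  have hall := (Finset.sum_eq_zero_iff_of_nonneg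
    (fun j (_ : j ∈ Finset.univ) => sq_nonneg (x j - curveOf f (sCoord x) j))).1
    (le_antisymm (by linarith) (Finset.sum_nonneg (fun j _ => sq_nonneg _)))
  have := hall i (Finset.mem_univ i)
  have : x i - curveOf f (sCoord x) i = 0 := by
    exact pow_eq_zero_iff (by norm_num) |>.1 this
  linarith

omit hf in
theorem sum_expand3 (x y : Fin k → ℝ) :
    ∑ i, (x i + y i) ^ 2 = (∑ i, x i ^ 2) + 2 * (∑ i, x i * y i) + ∑ i, y i ^ 2 := by
  have h : ∀ i : Fin k, (x i + y i) ^ 2 = x i ^ 2 + 2 * (x i * y i) + y i ^ 2 :=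
    fun i => by ring
  rw [Finset.sum_congr rfl (fun i _ => h i), Finset.sum_add_distrib, Finset.sum_add_distrib,
    ← Finset.mul_sum]

omit hf in
theorem sum_expand4 (y r : Fin k → ℝ) (t : ℝ) :
    ∑ i, (t - y i) * r i = t * (∑ i, r i) - ∑ i, y i * r i := by
  have h : ∀ i : Fin k, (t - y i) * r i = t * r i - y i * r i := fun i => by ring
  rw [Finset.sum_congr rfl (fun i _ => h i), Finset.sum_sub_distrib, ← Finset.mul_sum]

theorem H_upper (hconj : CConjugateTuple f) (hm₂ : 0 ≤ m₂) (hk : 0 < k)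
    (t : ℝ) (r : Fin k → ℝ) :
    Hfun f (fun i => curveOf f t i + r i) ≤ (m₂ + 1) / 2 * ∑ i, r i ^ 2 := by
  set y : Fin k → ℝ := curveOf f t with hy
  have htay : ∀ i, f i (y i + r i) - f i (y i) ≤ (t - y i) * r i + m₂ * r i ^ 2 / 2 := by
    intro i
    have h := taylorUpper (hfC hf i) (hf2' hf i) (y i) (y i + r i)
    have hd : deriv (f i) (y i) = t - y i := deriv_at_curve hf t i
    rw [hd] at h
    have : y i + r i - y i = r i := by ring
    rw [this] at h
    linarith
  have hsum : (∑ i, f i (y i + r i)) - (∑ i, f i (y i)) ≤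
      (∑ i, (t - y i) * r i) + m₂ * (∑ i, r i ^ 2) / 2 := by
    have h1 : ∑ i, (f i (y i + r i) - f i (y i)) ≤
        ∑ i, ((t - y i) * r i + m₂ * r i ^ 2 / 2) :=
      Finset.sum_le_sum (fun i _ => htay i)
    rw [Finset.sum_sub_distrib, Finset.sum_add_distrib] at h1
    have h2 : ∑ i, m₂ * r i ^ 2 / 2 = m₂ * (∑ i, r i ^ 2) / 2 := by
      rw [← Finset.sum_div, ← Finset.mul_sum]
    rw [h2] at h1
    exact h1
  have hzero := H_on_curve_zero hf hconj hm₂ hk t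
  rw [Hfun_eq] at hzero
  have hB : ∑ i, y i = t := sigma_id hf hconj hm₂ hk t
  rw [Hfun_eq]
  rw [sum_expand4 y r t] at hsum
  have e3 := sum_expand3 y r
  have e4 : ∑ i, (y i + r i) = (∑ i, y i) + ∑ i, r i := Finset.sum_add_distrib
  rw [e3, e4, hB]
  rw [hB] at hzero
  have hu2 := sq_nonneg (∑ i, r i)
  nlinarith [hsum, hzero, hu2]

theorem curve_dist (hconj : CConjugateTuple f) (hm₂ : 0 ≤ m₂) (hk : 0 < k)
    (t : ℝ) (r : Fin k → ℝ) :
    ∑ i, ((curveOf f t i + r i) - curveOf f (sCoord (fun j => curveOf f t j + r j)) i) ^ 2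
      ≤ (2 * k + 2) * ∑ i, r i ^ 2 := by
  set u : ℝ := ∑ i, r i with hu
  have hsC : sCoord (fun j => curveOf f t j + r j) = t + u := by
    unfold sCoord
    rw [Finset.sum_add_distrib]
    have := sigma_id hf hconj hm₂ hk t
    unfold sCoord at this
    rw [this]
  rw [hsC]
  set δ : Fin k → ℝ := fun i => curveOf f (t + u) i - curveOf f t i with hδdef
  have hδ : ∀ i, δ i ^ 2 ≤ u * δ i := by
    intro i
    rcases le_total 0 u with h | h
    · have h1 := gammaMono (hfC hf i) (hf2 hf i) (by linarith : t ≤ t + u)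
      have h2 := gammaLip (hfC hf i) (hf2 hf i) (by linarith : t ≤ t + u)
      simp only [hδdef]
      unfold curveOf
      unfold curveOf at h1 h2
      nlinarith
    · have h1 := gammaMono (hfC hf i) (hf2 hf i) (by linarith : t + u ≤ t)
      have h2 := gammaLip (hfC hf i) (hf2 hf i) (by linarith : t + u ≤ t)
      simp only [hδdef]
      unfold curveOf
      unfold curveOf at h1 h2
      nlinarith
  have hδsum : ∑ i, δ i = u := by
    simp only [hδdef]
    rw [Finset.sum_sub_distrib]
    have h1 := sigma_id hf hconj hm₂ hk (t + u)
    have h2 := sigma_id hf hconj hm₂ hk t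
    unfold sCoord at h1 h2
    rw [h1, h2]
    ring
  have hδ2 : ∑ i, δ i ^ 2 ≤ u ^ 2 := by
    calc ∑ i, δ i ^ 2 ≤ ∑ i, u * δ i := Finset.sum_le_sum (fun i _ => hδ i)
      _ = u * ∑ i, δ i := by rw [Finset.mul_sum]
      _ = u ^ 2 := by rw [hδsum]; ring
  have hu2 : u ^ 2 ≤ k * ∑ i, r i ^ 2 := by
    have := sq_sum_le_card_mul_sum_sq (s := (Finset.univ : Finset (Fin k))) (f := r)
    simpa [hu] using this
  have hterm : ∀ i, ((curveOf f t i + r i) - curveOf f (t + u) i) ^ 2 ≤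
      2 * r i ^ 2 + 2 * δ i ^ 2 := by
    intro i
    have : (curveOf f t i + r i) - curveOf f (t + u) i = r i - δ i := by
      simp only [hδdef]; ring
    rw [this]
    nlinarith [sq_nonneg (r i + δ i)]
  calc ∑ i, ((curveOf f t i + r i) - curveOf f (t + u) i) ^ 2
      ≤ ∑ i, (2 * r i ^ 2 + 2 * δ i ^ 2) := Finset.sum_le_sum (fun i _ => hterm i)
    _ = 2 * (∑ i, r i ^ 2) + 2 * ∑ i, δ i ^ 2 := by
        rw [Finset.sum_add_distrib, ← Finset.mul_sum, ← Finset.mul_sum]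
    _ ≤ 2 * (∑ i, r i ^ 2) + 2 * (k * ∑ i, r i ^ 2) := by
        have := le_trans hδ2 hu2
        linarith
    _ = (2 * k + 2) * ∑ i, r i ^ 2 := by ring

end Tuple

theorem pathwise_bound {k n : ℕ} (hk : 0 < k) (hn : 0 < n) {lam m₀ m₁ m₂ m₃ : ℝ}
    (hlam : 0 ≤ lam) (hm₂ : 0 ≤ m₂)
    {f fh : Fin k → ℝ → ℝ} (hf : ∀ i, f i ∈ Cm m₀ m₁ m₂ m₃) (hconj : CConjugateTuple f)
    (hfh : ∀ i, fh i ∈ Cm m₀ m₁ m₂ m₃) (hconjh : CConjugateTuple fh)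
    (Z : Fin n → Fin k → ℝ)
    (hmin : empObj n lam Z fh ≤ empObj n lam Z f) :
    (n:ℝ)⁻¹ * ∑ m, ∑ i, (curveOf f (sCoord (Z m)) i - curveOf fh (sCoord (Z m)) i) ^ 2 ≤
      4 / (2*lam+1) * ((n:ℝ)⁻¹ * ∑ m, Hfun f (Z m)) +
      (8*lam+2) / (2*lam+1) *
        ((n:ℝ)⁻¹ * ∑ m, ∑ i, (Z m i - curveOf f (sCoord (Z m)) i) ^ 2) := by
  have h2l : (0:ℝ) < 2*lam+1 := by linarith
  have hninv : (0:ℝ) ≤ (n:ℝ)⁻¹ := by positivity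
  set A : Fin n → ℝ := fun m => ∑ i, (Z m i - curveOf fh (sCoord (Z m)) i) ^ 2 with hA
  set B : Fin n → ℝ := fun m => ∑ i, (Z m i - curveOf f (sCoord (Z m)) i) ^ 2 with hB
  set D : Fin n → ℝ := fun m => ∑ i, (curveOf f (sCoord (Z m)) i - curveOf fh (sCoord (Z m)) i) ^ 2 with hD
  -- quad lower bound for fh
  have hquad : ∀ m, A m / 2 ≤ Hfun fh (Z m) := fun m => H_ge_quad hfh hconjh hm₂ hk (Z m)
  -- minimizer inequality, aggregated
  have hmin' : ∑ m, (Hfun fh (Z m) + lam * A m) ≤ ∑ m, (Hfun f (Z m) + lam * B m) := by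
    have hnpos : (0:ℝ) < (n:ℝ)⁻¹ := by positivity
    unfold empObj at hmin
    exact le_of_mul_le_mul_left (by simpa using hmin) hnpos
  have hSA : (2*lam+1) * (∑ m, A m) ≤ 2 * (∑ m, Hfun f (Z m)) + 2 * lam * ∑ m, B m := by
    have h1 : ∀ m, (lam + 1/2) * A m ≤ Hfun fh (Z m) + lam * A m := by
      intro m; have := hquad m; nlinarith
    have h2 : (lam + 1/2) * ∑ m, A m ≤ ∑ m, (Hfun fh (Z m) + lam * A m) := by
      rw [Finset.mul_sum]
      exact Finset.sum_le_sum (fun m _ => h1 m)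
    have h3 := le_trans h2 hmin'
    have h4 : ∑ m, (Hfun f (Z m) + lam * B m) = (∑ m, Hfun f (Z m)) + lam * ∑ m, B m := by
      rw [Finset.sum_add_distrib, Finset.mul_sum]
    rw [h4] at h3
    nlinarith
  have hSD : ∑ m, D m ≤ 2 * (∑ m, A m) + 2 * ∑ m, B m := by
    have h1 : ∀ m, D m ≤ 2 * B m + 2 * A m := by
      intro m
      simp only [hA, hB, hD]
      rw [Finset.mul_sum, Finset.mul_sum, ← Finset.sum_add_distrib]
      apply Finset.sum_le_sum
      intro i _
      nlinarith [sq_nonneg ((Z m i - curveOf f (sCoord (Z m)) i) +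
        (Z m i - curveOf fh (sCoord (Z m)) i))]
    calc ∑ m, D m ≤ ∑ m, (2 * B m + 2 * A m) := Finset.sum_le_sum (fun m _ => h1 m)
      _ = 2 * (∑ m, A m) + 2 * ∑ m, B m := by
          rw [Finset.sum_add_distrib, ← Finset.mul_sum, ← Finset.mul_sum]; ring
  have hBnn : 0 ≤ ∑ m, B m := Finset.sum_nonneg (fun m _ =>
    Finset.sum_nonneg (fun i _ => sq_nonneg _))
  have hAnn : 0 ≤ ∑ m, A m := Finset.sum_nonneg (fun m _ =>
    Finset.sum_nonneg (fun i _ => sq_nonneg _))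
  rw [div_mul_eq_mul_div, div_mul_eq_mul_div, ← add_div, le_div_iff₀ h2l]
  have key : (2*lam+1) * (∑ m, D m) ≤ 4 * (∑ m, Hfun f (Z m)) + (8*lam+2) * ∑ m, B m := by
    nlinarith
  nlinarith [mul_le_mul_of_nonneg_left key hninv]


theorem psiH_continuous {k : ℕ} {m₀ m₁ m₂ m₃ : ℝ} {f : Fin k → ℝ → ℝ}
    (hf : ∀ i, f i ∈ Cm m₀ m₁ m₂ m₃) :
    Continuous (fun x : Fin k → ℝ => Hfun f x) := by
  have heq : (fun x : Fin k → ℝ => Hfun f x) =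
      fun x => (∑ i, f i (x i)) - ((∑ i, x i) ^ 2 - ∑ i, x i ^ 2) / 2 := by
    funext x; rw [Hfun_eq]
  rw [heq]
  have h1 : Continuous (fun x : Fin k → ℝ => ∑ i, f i (x i)) :=
    continuous_finset_sum _ (fun i _ => ((hfC hf i).continuous).comp (continuous_apply i))
  have h2 : Continuous (fun x : Fin k → ℝ => ∑ i, x i) :=
    continuous_finset_sum _ (fun i _ => continuous_apply i)
  have h3 : Continuous (fun x : Fin k → ℝ => ∑ i, x i ^ 2) :=
    continuous_finset_sum _ (fun i _ => (continuous_apply i).pow 2)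
  exact h1.sub (((h2.pow 2).sub h3).div_const 2)

theorem sCoord_continuous {k : ℕ} : Continuous (fun x : Fin k → ℝ => sCoord x) := by
  unfold sCoord
  exact continuous_finset_sum _ (fun i _ => continuous_apply i)

theorem psiB_continuous {k : ℕ} {m₀ m₁ m₂ m₃ : ℝ} {f : Fin k → ℝ → ℝ}
    (hf : ∀ i, f i ∈ Cm m₀ m₁ m₂ m₃) :
    Continuous (fun x : Fin k → ℝ => ∑ i, (x i - curveOf f (sCoord x) i) ^ 2) := by
  apply continuous_finset_sum
  intro i _
  exact ((continuous_apply i).sub ((gammaContinuous hf i).comp sCoord_continuous)).pow 2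

/-- (Expected empirical MSE bound.) For the population model
`X = U + R` with `U ∈ Γ = {H(·; f) = 0}` a.s. and centered noise `R`, and `f̂` a random
`c`-conjugate empirical minimizer over `(𝒞_m)^k`, the expected empirical mean squared
error of the curve estimate is at most
`((16λ + 4)k + 16λ + 2m₂ + 6)/(2λ + 1) · E‖R‖²`. -/
theorem expected_empirical_mse_bound
    (k n : ℕ) (hk : 2 ≤ k) (hn : 0 < n)
    (lam : ℝ) (hlam : 0 ≤ lam)
    (m₀ m₁ m₂ m₃ : ℝ) (hm₀ : 0 ≤ m₀) (hm₁ : 0 ≤ m₁) (hm₂ : 0 ≤ m₂) (hm₃ : 0 ≤ m₃)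
    (f : Fin k → ℝ → ℝ) (hf : ∀ i, f i ∈ Cm m₀ m₁ m₂ m₃) (hconj : CConjugateTuple f)
    {Ω : Type*} [MeasurableSpace Ω] (μ : Measure Ω) [IsProbabilityMeasure μ]
    (U R : Ω → Fin k → ℝ)
    (hUmeas : Measurable U) (hRmeas : Measurable R)
    (hindep : IndepFun U R μ)
    (hUΓ : ∀ᵐ ω ∂μ, Hfun f (U ω) = 0)
    (hRint : ∀ i, Integrable (fun ω => R ω i) μ)
    (hRmean : ∀ i, ∫ ω, R ω i ∂μ = 0)
    (hX2 : Integrable (fun ω => ∑ i, (U ω i + R ω i) ^ 2) μ)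
    (hR2 : Integrable (fun ω => ∑ i, (R ω i) ^ 2) μ)
    (X : Fin n → Ω → Fin k → ℝ)
    (hXmeas : ∀ m, Measurable (X m))
    (hXindep : iIndepFun X μ)
    (hXdist : ∀ m, IdentDistrib (X m) (fun ω => U ω + R ω) μ μ)
    (fhat : Ω → Fin k → ℝ → ℝ)
    (hfhat : ∀ᵐ ω ∂μ,
      (∀ i, fhat ω i ∈ Cm m₀ m₁ m₂ m₃) ∧ CConjugateTuple (fhat ω) ∧
      ∀ h : Fin k → ℝ → ℝ, (∀ i, h i ∈ Cm m₀ m₁ m₂ m₃) → CConjugateTuple h →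
        empObj n lam (fun m => X m ω) (fhat ω) ≤ empObj n lam (fun m => X m ω) h)
    (hMSEint : Integrable (fun ω => (n : ℝ)⁻¹ * ∑ m : Fin n, ∑ i,
      (curveOf f (sCoord (X m ω)) i - curveOf (fhat ω) (sCoord (X m ω)) i) ^ 2) μ) :
    ∫ ω, (n : ℝ)⁻¹ * ∑ m : Fin n, ∑ i,
        (curveOf f (sCoord (X m ω)) i - curveOf (fhat ω) (sCoord (X m ω)) i) ^ 2 ∂μ ≤
      ((16 * lam + 4) * k + 16 * lam + 2 * m₂ + 6) / (2 * lam + 1) *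
        ∫ ω, ∑ i, (R ω i) ^ 2 ∂μ := by
  have hk0 : 0 < k := by omega
  have h2l : (0:ℝ) < 2 * lam + 1 := by linarith
  set c₁ : ℝ := 4 / (2 * lam + 1) with hc₁def
  set c₂ : ℝ := (8 * lam + 2) / (2 * lam + 1) with hc₂def
  have hc₁ : 0 ≤ c₁ := by positivity
  have hc₂ : 0 ≤ c₂ := by positivity
  set ψH : (Fin k → ℝ) → ℝ := fun x => Hfun f x with hψHdef
  set ψB : (Fin k → ℝ) → ℝ := fun x => ∑ i, (x i - curveOf f (sCoord x) i) ^ 2 with hψBdef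
  have hψHc : Continuous ψH := psiH_continuous hf
  have hψBc : Continuous ψB := psiB_continuous hf
  have hXURmeas : Measurable (fun ω => U ω + R ω) := hUmeas.add hRmeas
  have hψHnn : ∀ x, 0 ≤ ψH x := fun x => H_nonneg hconj hk0 x
  have hψBnn : ∀ x, 0 ≤ ψB x := fun x => Finset.sum_nonneg (fun i _ => sq_nonneg _)
  -- a.e. bounds at U + R
  have hUcurve : ∀ᵐ ω ∂μ, ∀ i, U ω i = curveOf f (sCoord (U ω)) i := by
    filter_upwards [hUΓ] with ω hω
    exact fun i => on_curve_of_H_zero hf hconj hm₂ hk0 hω i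
  have hHb : ∀ᵐ ω ∂μ, ψH (U ω + R ω) ≤ (m₂ + 1) / 2 * ∑ i, R ω i ^ 2 := by
    filter_upwards [hUcurve] with ω hω
    have heq : U ω + R ω = fun i => curveOf f (sCoord (U ω)) i + R ω i := by
      funext i; rw [Pi.add_apply, hω i]
    simp only [hψHdef]
    rw [heq]
    exact H_upper hf hconj hm₂ hk0 _ _
  have hBb : ∀ᵐ ω ∂μ, ψB (U ω + R ω) ≤ (2 * k + 2) * ∑ i, R ω i ^ 2 := by
    filter_upwards [hUcurve] with ω hω
    have heq : U ω + R ω = fun i => curveOf f (sCoord (U ω)) i + R ω i := by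
      funext i; rw [Pi.add_apply, hω i]
    simp only [hψBdef]
    rw [heq]
    exact curve_dist hf hconj hm₂ hk0 _ _
  -- integrability at U + R
  have hψHint : Integrable (fun ω => ψH (U ω + R ω)) μ := by
    apply Integrable.mono' (hR2.const_mul ((m₂ + 1) / 2))
      ((hψHc.measurable.comp hXURmeas).aestronglyMeasurable)
    filter_upwards [hHb] with ω h
    exact le_trans (le_of_eq (Real.norm_of_nonneg (hψHnn _))) h
  have hψBint : Integrable (fun ω => ψB (U ω + R ω)) μ := by
    apply Integrable.mono' (hR2.const_mul ((2 * k + 2)))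
      ((hψBc.measurable.comp hXURmeas).aestronglyMeasurable)
    filter_upwards [hBb] with ω h
    exact le_trans (le_of_eq (Real.norm_of_nonneg (hψBnn _))) h
  -- transfer to X m
  have hdistH : ∀ m, IdentDistrib (fun ω => ψH (X m ω)) (fun ω => ψH (U ω + R ω)) μ μ :=
    fun m => (hXdist m).comp hψHc.measurable
  have hdistB : ∀ m, IdentDistrib (fun ω => ψB (X m ω)) (fun ω => ψB (U ω + R ω)) μ μ :=
    fun m => (hXdist m).comp hψBc.measurable
  have hψHXint : ∀ m, Integrable (fun ω => ψH (X m ω)) μ :=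
    fun m => ((hdistH m).integrable_iff).2 hψHint
  have hψBXint : ∀ m, Integrable (fun ω => ψB (X m ω)) μ :=
    fun m => ((hdistB m).integrable_iff).2 hψBint
  have hψHXeq : ∀ m, ∫ ω, ψH (X m ω) ∂μ = ∫ ω, ψH (U ω + R ω) ∂μ :=
    fun m => (hdistH m).integral_eq
  have hψBXeq : ∀ m, ∫ ω, ψB (X m ω) ∂μ = ∫ ω, ψB (U ω + R ω) ∂μ :=
    fun m => (hdistB m).integral_eq
  -- integral bounds
  have hE0 : 0 ≤ ∫ ω, ∑ i, R ω i ^ 2 ∂μ :=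
    integral_nonneg (fun ω => Finset.sum_nonneg (fun i _ => sq_nonneg _))
  have hIH : ∫ ω, ψH (U ω + R ω) ∂μ ≤ (m₂ + 1) / 2 * ∫ ω, ∑ i, R ω i ^ 2 ∂μ := by
    rw [← integral_const_mul]
    exact integral_mono_ae hψHint (hR2.const_mul _) hHb
  have hIB : ∫ ω, ψB (U ω + R ω) ∂μ ≤ (2 * k + 2) * ∫ ω, ∑ i, R ω i ^ 2 ∂μ := by
    rw [← integral_const_mul]
    exact integral_mono_ae hψBint (hR2.const_mul _) hBb
  -- pathwise bound
  have hae : ∀ᵐ ω ∂μ,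
      (n : ℝ)⁻¹ * ∑ m : Fin n, ∑ i,
        (curveOf f (sCoord (X m ω)) i - curveOf (fhat ω) (sCoord (X m ω)) i) ^ 2 ≤
      c₁ * ((n : ℝ)⁻¹ * ∑ m : Fin n, ψH (X m ω)) +
        c₂ * ((n : ℝ)⁻¹ * ∑ m : Fin n, ψB (X m ω)) := by
    filter_upwards [hfhat] with ω hω
    obtain ⟨hfhCm, hfhconj, hmin⟩ := hω
    exact pathwise_bound hk0 hn hlam hm₂ hf hconj hfhCm hfhconj (fun m => X m ω)
      (hmin f hf hconj)
  have hRHSint : Integrable (fun ω =>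
      c₁ * ((n : ℝ)⁻¹ * ∑ m : Fin n, ψH (X m ω)) +
        c₂ * ((n : ℝ)⁻¹ * ∑ m : Fin n, ψB (X m ω))) μ := by
    apply Integrable.add
    · exact ((integrable_finset_sum _ (fun m _ => hψHXint m)).const_mul _).const_mul _
    · exact ((integrable_finset_sum _ (fun m _ => hψBXint m)).const_mul _).const_mul _
  have hmain := integral_mono_ae hMSEint hRHSint hae
  -- compute the RHS integral
  have hnne : ((n : ℝ))⁻¹ * (n : ℝ) = 1 := by
    rw [inv_mul_cancel₀]
    exact_mod_cast Nat.pos_iff_ne_zero.1 hn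
  have eH : ∫ ω, (n : ℝ)⁻¹ * ∑ m : Fin n, ψH (X m ω) ∂μ = ∫ ω, ψH (U ω + R ω) ∂μ := by
    rw [integral_const_mul, integral_finset_sum _ (fun m _ => hψHXint m)]
    rw [Finset.sum_congr rfl (fun m _ => hψHXeq m), Finset.sum_const, Finset.card_univ,
      Fintype.card_fin, nsmul_eq_mul]
    rw [← mul_assoc, hnne, one_mul]
  have eB : ∫ ω, (n : ℝ)⁻¹ * ∑ m : Fin n, ψB (X m ω) ∂μ = ∫ ω, ψB (U ω + R ω) ∂μ := by
    rw [integral_const_mul, integral_finset_sum _ (fun m _ => hψBXint m)]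
    rw [Finset.sum_congr rfl (fun m _ => hψBXeq m), Finset.sum_const, Finset.card_univ,
      Fintype.card_fin, nsmul_eq_mul]
    rw [← mul_assoc, hnne, one_mul]
  have hRHSval : ∫ ω, (c₁ * ((n : ℝ)⁻¹ * ∑ m : Fin n, ψH (X m ω)) +
      c₂ * ((n : ℝ)⁻¹ * ∑ m : Fin n, ψB (X m ω))) ∂μ =
      c₁ * ∫ ω, ψH (U ω + R ω) ∂μ + c₂ * ∫ ω, ψB (U ω + R ω) ∂μ := by
    rw [integral_add (((integrable_finset_sum _ (fun m _ => hψHXint m)).const_mul _).const_mul _)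
      (((integrable_finset_sum _ (fun m _ => hψBXint m)).const_mul _).const_mul _)]
    have h1 : ∫ ω, c₁ * ((n : ℝ)⁻¹ * ∑ m : Fin n, ψH (X m ω)) ∂μ =
        c₁ * ∫ ω, (n : ℝ)⁻¹ * ∑ m : Fin n, ψH (X m ω) ∂μ := integral_const_mul _ _
    have h2 : ∫ ω, c₂ * ((n : ℝ)⁻¹ * ∑ m : Fin n, ψB (X m ω)) ∂μ =
        c₂ * ∫ ω, (n : ℝ)⁻¹ * ∑ m : Fin n, ψB (X m ω) ∂μ := integral_const_mul _ _
    rw [h1, h2, eH, eB]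
  rw [hRHSval] at hmain
  -- final constant computation
  have hconst : c₁ * ((m₂ + 1) / 2) + c₂ * (2 * k + 2) =
      ((16 * lam + 4) * k + 16 * lam + 2 * m₂ + 6) / (2 * lam + 1) := by
    rw [hc₁def, hc₂def]
    field_simp
    ring
  calc ∫ ω, (n : ℝ)⁻¹ * ∑ m : Fin n, ∑ i,
        (curveOf f (sCoord (X m ω)) i - curveOf (fhat ω) (sCoord (X m ω)) i) ^ 2 ∂μ
      ≤ c₁ * ∫ ω, ψH (U ω + R ω) ∂μ + c₂ * ∫ ω, ψB (U ω + R ω) ∂μ := hmain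
    _ ≤ c₁ * ((m₂ + 1) / 2 * ∫ ω, ∑ i, R ω i ^ 2 ∂μ) +
          c₂ * ((2 * k + 2) * ∫ ω, ∑ i, R ω i ^ 2 ∂μ) := by
        apply add_le_add
        · exact mul_le_mul_of_nonneg_left hIH hc₁
        · exact mul_le_mul_of_nonneg_left hIB hc₂
    _ = (c₁ * ((m₂ + 1) / 2) + c₂ * (2 * k + 2)) * ∫ ω, ∑ i, R ω i ^ 2 ∂μ := by ring
    _ = ((16 * lam + 4) * k + 16 * lam + 2 * m₂ + 6) / (2 * lam + 1) *
          ∫ ω, ∑ i, R ω i ^ 2 ∂μ := by rw [hconst]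


end
end
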